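/- arXiv:2009.05735 — 3 statements merged into one kernel-verified Lean document; each statement's English description precedes it below -/
import Mathlib

section
/- Let 0 ≤ k ≤ n and d ≥ 1. Let C be an F_2-subspace of F_2^{2n} of dimension n − k that is self-orthogonal with respect to the symplectic inner product (C ⊆ C^{⊥s}), and suppose that every element of C^{⊥s} \ C has quantum weight at least d. Then there exists an [[n, k, d]] qubit code, i.e., a subspace Q of ℂ^{2^n} of dimension 2^k satisfying the Knill–Laflamme condition for d. -/
open Matrix

open scoped BigOperators

/-- The bit-flip type error operator `X(a)`, acting on `ℂ^{2^n}` (with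
coordinates indexed by `F_2^n`) by `X(a) e_v = e_{a+v}`. -/
noncomputable def Xop (n : ℕ) (a : Fin n → ZMod 2) :
    Matrix (Fin n → ZMod 2) (Fin n → ZMod 2) ℂ :=
  Matrix.of fun w v => if w = a + v then 1 else 0

/-- The phase-flip type error operator `Z(b)`, acting on `ℂ^{2^n}` by
`Z(b) e_v = (−1)^{b·v} e_v`, the `F_2` dot product `b·v` being lifted to
`{0,1} ⊆ ℤ` in the exponent. -/
noncomputable def Zop (n : ℕ) (b : Fin n → ZMod 2) :
    Matrix (Fin n → ZMod 2) (Fin n → ZMod 2) ℂ :=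
  Matrix.of fun w v => if w = v then ((-1 : ℂ) ^ (b ⬝ᵥ v).val) else 0

/-- The quantum weight of `(a|b) ∈ F_2^{2n}`: the number of indices `i` with
`a_i ≠ 0` or `b_i ≠ 0`. -/
def wQ (n : ℕ) (a b : Fin n → ZMod 2) : ℕ :=
  (Finset.univ.filter fun i : Fin n => a i ≠ 0 ∨ b i ≠ 0).card

/-- The symplectic inner product on `F_2^{2n}`, whose elements are viewed as
pairs `(a|b)` with `a, b ∈ F_2^n`: `⟨(a|b), (a'|b')⟩_s = a·b' + a'·b`. -/
def sympl (n : ℕ) (u v : (Fin n → ZMod 2) × (Fin n → ZMod 2)) : ZMod 2 :=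
  u.1 ⬝ᵥ v.2 + v.1 ⬝ᵥ u.2


noncomputable def Eop (n : ℕ) (c : (Fin n → ZMod 2) × (Fin n → ZMod 2)) :
    Matrix (Fin n → ZMod 2) (Fin n → ZMod 2) ℂ :=
  Matrix.of fun w v => if w = c.1 + v then ((-1 : ℂ) ^ (c.2 ⬝ᵥ v).val) else 0

-- sign helper
lemma sgn_add (s t : ZMod 2) : ((-1 : ℂ)) ^ (s + t).val = (-1) ^ s.val * (-1) ^ t.val := by
  have key : ∀ x : ZMod 2, x = 0 ∨ x = 1 := by decide
  have hval : ((1 : ZMod 2) + 1) = 0 := by decide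
  have h1 : ZMod.val (1 : ZMod 2) = 1 := rfl
  have h0 : ZMod.val (0 : ZMod 2) = 0 := rfl
  rcases key s with h | h <;> rcases key t with h' | h' <;> subst h <;> subst h' <;>
    simp [hval, h1, h0]

lemma flip_eq {n : ℕ} (a x y : Fin n → ZMod 2) : (y = a + x) ↔ (x = a + y) := by
  constructor <;> intro h <;> subst h <;> funext i <;>
    simp [← add_assoc, CharTwo.add_self_eq_zero]

lemma XZ_eq_Eop (n : ℕ) (a b : Fin n → ZMod 2) : Xop n a * Zop n b = Eop n (a, b) := by
  ext w v
  simp only [Xop, Zop, Eop, Matrix.mul_apply, Matrix.of_apply]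
  rw [Finset.sum_eq_single v]
  · simp
  · intro u _ hu
    simp [hu]
  · simp

lemma Eop_mul (n : ℕ) (c c' : (Fin n → ZMod 2) × (Fin n → ZMod 2)) :
    Eop n c * Eop n c' = ((-1 : ℂ) ^ (c.2 ⬝ᵥ c'.1).val) • Eop n (c + c') := by
  ext w v
  simp only [Eop, Matrix.mul_apply, Matrix.of_apply, Matrix.smul_apply, smul_eq_mul]
  rw [Finset.sum_eq_single (c'.1 + v)]
  · have h1 : (w = c.1 + (c'.1 + v)) ↔ (w = (c + c').1 + v) := by
      rw [Prod.fst_add, add_assoc]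
    rcases eq_or_ne w ((c + c').1 + v) with h | h
    · rw [if_pos (h1.mpr h), if_pos rfl, if_pos h]
      rw [dotProduct_add, sgn_add, Prod.snd_add, add_dotProduct, sgn_add]
      ring
    · rw [if_neg (fun hh => h (h1.mp hh)), if_pos rfl, if_neg h, zero_mul, mul_zero]
  · intro u _ hu
    rw [if_neg (fun hh : u = c'.1 + v => hu hh), mul_zero]
  · simp

lemma Eop_zero (n : ℕ) : Eop n 0 = 1 := by
  ext w v
  simp [Eop, Matrix.one_apply, eq_comm]

lemma Eop_conjTranspose (n : ℕ) (c : (Fin n → ZMod 2) × (Fin n → ZMod 2)) :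
    (Eop n c)ᴴ = ((-1 : ℂ) ^ (c.2 ⬝ᵥ c.1).val) • Eop n c := by
  ext w v
  simp only [Eop, Matrix.conjTranspose_apply, Matrix.of_apply, Matrix.smul_apply, smul_eq_mul]
  rcases eq_or_ne w (c.1 + v) with h | h
  · rw [if_pos ((flip_eq _ _ _).mpr h), if_pos h]
    have : c.2 ⬝ᵥ w = c.2 ⬝ᵥ c.1 + c.2 ⬝ᵥ v := by rw [h, dotProduct_add]
    rw [this, sgn_add]
    simp
  · rw [if_neg (fun hh => h ((flip_eq _ _ _).mp hh)), if_neg h, star_zero, mul_zero]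

lemma sgn_one : ((-1 : ℂ)) ^ (1 : ZMod 2).val = -1 := by
  have : (1 : ZMod 2).val = 1 := rfl
  rw [this, pow_one]

lemma char_sum (n : ℕ) (b : Fin n → ZMod 2) (hb : b ≠ 0) :
    ∑ v : Fin n → ZMod 2, ((-1 : ℂ)) ^ (b ⬝ᵥ v).val = 0 := by
  obtain ⟨i, hi⟩ : ∃ i, b i ≠ 0 := by
    by_contra h
    push_neg at h
    exact hb (funext h)
  have hbi : b i = 1 := by
    rcases (by decide : ∀ x : ZMod 2, x = 0 ∨ x = 1) (b i) with h | h
    · exact absurd h hi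
    · exact h
  apply Finset.sum_ninvolution (g := fun v => v + Pi.single i (1 : ZMod 2))
  · intro v
    have hdv : b ⬝ᵥ (v + Pi.single i 1) = b ⬝ᵥ v + 1 := by
      rw [dotProduct_add, dotProduct_single, hbi, one_mul]
    rw [hdv, sgn_add, sgn_one]
    ring
  · intro v hv
    intro hcon
    have : (Pi.single i 1 : Fin n → ZMod 2) = 0 := by
      have := congrArg (fun w => w + v) hcon
      simpa [add_comm, add_assoc, add_left_comm] using this
    have := congrFun this i
    simp at this
  · intro v; exact Finset.mem_univ _
  · intro v
    funext j
    rcases eq_or_ne j i with h | h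
    · subst h; simp [CharTwo.add_self_eq_zero, add_assoc]
    · simp [Pi.single_eq_of_ne h]

lemma Eop_trace (n : ℕ) (c : (Fin n → ZMod 2) × (Fin n → ZMod 2)) :
    Matrix.trace (Eop n c) = if c = 0 then ((2 : ℂ) ^ n) else 0 := by
  rcases eq_or_ne c 0 with h | h
  · subst h
    rw [Eop_zero, if_pos rfl]
    simp [Matrix.trace, Matrix.diag, Matrix.one_apply]
  · rw [if_neg h]
    rcases eq_or_ne c.1 0 with h1 | h1
    · have h2 : c.2 ≠ 0 := by
        intro h2
        exact h (Prod.ext h1 h2)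
      simp only [Matrix.trace, Matrix.diag, Eop, Matrix.of_apply, h1, zero_add, if_pos rfl]
      simpa using char_sum n c.2 h2
    · simp only [Matrix.trace, Matrix.diag, Eop, Matrix.of_apply]
      apply Finset.sum_eq_zero
      intro v _
      rw [if_neg]
      intro hv
      apply h1
      have := congrArg (fun w => w + v) hv
      funext j
      have := congrFun this j
      simpa [add_assoc, CharTwo.add_self_eq_zero, eq_comm] using this

open Finset

def P2 (m : ℕ) : Finset (Fin m × Fin m) :=
  (Finset.univ ×ˢ Finset.univ).filter (fun p => p.1 < p.2)

lemma sum_prod_split {m : ℕ} (g : Fin m → Fin m → ℤ) :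
    ∑ i, ∑ j, g i j
      = (∑ i, g i i) + ∑ p ∈ P2 m, (g p.1 p.2 + g p.2 p.1) := by
  classical
  rw [← Finset.sum_product']
  rw [← Finset.sum_filter_add_sum_filter_not (Finset.univ ×ˢ Finset.univ)
      (fun p : Fin m × Fin m => p.1 < p.2) (fun p => g p.1 p.2)]
  have hsplit2 := Finset.sum_filter_add_sum_filter_not
      ((Finset.univ ×ˢ Finset.univ).filter (fun p : Fin m × Fin m => ¬ p.1 < p.2))
      (fun p : Fin m × Fin m => p.1 = p.2) (fun p => g p.1 p.2)
  rw [← hsplit2]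
  have hdiag : ∑ p ∈ ((Finset.univ ×ˢ Finset.univ).filter
        (fun p : Fin m × Fin m => ¬ p.1 < p.2)).filter
        (fun p : Fin m × Fin m => p.1 = p.2), g p.1 p.2 = ∑ i, g i i := by
    apply Finset.sum_nbij' (i := fun p => p.1) (j := fun i => (i, i)) <;>
      simp +contextual [Finset.mem_filter, lt_irrefl, Prod.ext_iff, eq_comm]
  have hgt : ∑ p ∈ ((Finset.univ ×ˢ Finset.univ).filter
        (fun p : Fin m × Fin m => ¬ p.1 < p.2)).filter
        (fun p : Fin m × Fin m => ¬ p.1 = p.2), g p.1 p.2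
      = ∑ p ∈ P2 m, g p.2 p.1 := by
    apply Finset.sum_nbij' (i := Prod.swap) (j := Prod.swap) <;>
      simp +contextual [P2, Finset.mem_filter]
    · intro a b h1 h2
      omega
    · intro a b h
      constructor
      · omega
      · omega
  rw [hdiag, hgt, Finset.sum_add_distrib]
  simp only [P2]
  ring

lemma val_add_int : ∀ s t : ZMod 2,
    (((s + t).val : ℤ)) = (s.val : ℤ) + t.val - 2 * ((s.val : ℤ) * t.val) := by decide

lemma brkt : ∀ s t s' t' : ZMod 2,
    (2 : ℤ) ∣ (((s + t).val : ℤ) * ((s' + t').val : ℤ) - (s.val : ℤ) * s'.val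
      - (t.val : ℤ) * t'.val - (s.val : ℤ) * t'.val - (s'.val : ℤ) * t.val) := by decide

lemma int_cast_val : ∀ t : ZMod 2, (((t.val : ℤ) : ZMod 2)) = t := by decide

lemma neg_one_zpow_cast (t : ℤ) :
    ((-1 : ℂ)) ^ t = ((-1 : ℂ)) ^ (((t : ZMod 2)).val) := by
  rcases Int.even_or_odd t with ⟨c, hc⟩ | ⟨c, hc⟩
  · have h2 : ((t : ZMod 2)) = 0 := by
      rw [hc]; push_cast
      ring_nf
      simp [show ((2 : ZMod 2)) = 0 from rfl]
    rw [h2, hc]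
    have : ((-1 : ℂ)) ^ (c + c) = (((-1 : ℂ)) * (-1)) ^ c := by
      rw [mul_zpow, ← zpow_add₀ (by norm_num : (-1 : ℂ) ≠ 0)]
    simp [this]
  · have h2 : ((t : ZMod 2)) = 1 := by
      rw [hc]; push_cast
      ring_nf
      simp [show ((2 : ZMod 2)) = 0 from rfl]
    rw [h2, hc]
    have : ((-1 : ℂ)) ^ (2 * c + 1) = (((-1 : ℂ)) ^ (2 : ℤ)) ^ c * (-1) ^ (1 : ℤ) := by
      rw [← _root_.zpow_mul, ← zpow_add₀ (by norm_num : (-1 : ℂ) ≠ 0)]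
    rw [this, show ZMod.val (1 : ZMod 2) = 1 from rfl]
    norm_num

lemma exists_eps (m : ℕ) (Bm : Fin m → Fin m → ZMod 2) (hsym : ∀ i j, Bm i j = Bm j i) :
    ∃ ε : (Fin m → ZMod 2) → ℂ,
      ε 0 = 1 ∧
      (∀ x, ε x * (starRingEnd ℂ) (ε x) = 1) ∧
      ∀ x y, ε (x + y)
        = ε x * ε y * ((-1 : ℂ)) ^ (∑ i, ∑ j, x i * Bm i j * y j).val := by
  classical
  set hat : (Fin m → ZMod 2) → Fin m → ℤ := fun x i => ((x i).val : ℤ) with hhat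
  set vB : Fin m → Fin m → ℤ := fun i j => ((Bm i j).val : ℤ) with hvB
  have hvsym : ∀ i j, vB i j = vB j i := fun i j => by rw [hvB]; simp only; rw [hsym]
  set T : (Fin m → ZMod 2) → ℤ := fun x =>
    (∑ i, hat x i * vB i i)
      + 2 * ∑ p ∈ P2 m, hat x p.1 * hat x p.2 * vB p.1 p.2 with hT
  have hI := Complex.I_ne_zero
  have hI2 : Complex.I ^ (2 : ℤ) = -1 := by
    rw [show (2 : ℤ) = ((2 : ℕ) : ℤ) from rfl, zpow_natCast, Complex.I_sq]
  have hI4 : Complex.I ^ (4 : ℤ) = 1 := by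
    rw [show (4 : ℤ) = ((4 : ℕ) : ℤ) from rfl, zpow_natCast, Complex.I_pow_four]
  refine ⟨fun x => Complex.I ^ T x, ?_, ?_, ?_⟩
  · have : T 0 = 0 := by
      simp [hT, hhat, show ((0 : ZMod 2).val) = 0 from rfl]
    simp [this]
  · intro x
    rw [map_zpow₀, Complex.conj_I, ← mul_zpow]
    norm_num
  · intro x y
    set Bz : ℤ := ∑ i, ∑ j, hat x i * vB i j * hat y j with hBzdef
    have hBz : Bz = (∑ i, hat x i * vB i i * hat y i)
        + ∑ p ∈ P2 m, (hat x p.1 * vB p.1 p.2 * hat y p.2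
          + hat x p.2 * vB p.1 p.2 * hat y p.1) := by
      rw [hBzdef, sum_prod_split]
      congr 1
      apply Finset.sum_congr rfl
      intro p _
      rw [hvsym p.2 p.1]
    set dA : Fin m → ℤ := fun i =>
      hat (x + y) i * vB i i - hat x i * vB i i - hat y i * vB i i
        - 2 * (hat x i * vB i i * hat y i) with hdA
    set dB : Fin m × Fin m → ℤ := fun p =>
      2 * (hat (x + y) p.1 * hat (x + y) p.2 * vB p.1 p.2)
        - 2 * (hat x p.1 * hat x p.2 * vB p.1 p.2)
        - 2 * (hat y p.1 * hat y p.2 * vB p.1 p.2)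
        - 2 * (hat x p.1 * vB p.1 p.2 * hat y p.2
          + hat x p.2 * vB p.1 p.2 * hat y p.1) with hdB
    have hhatadd : ∀ (z w : Fin m → ZMod 2) (i : Fin m),
        hat (z + w) i = ((z i + w i).val : ℤ) := by
      intro z w i; simp [hhat]
    have hkey : T (x + y) = T x + T y + 2 * Bz + ((∑ i, dA i) + ∑ p ∈ P2 m, dB p) := by
      rw [hBz, hT]
      simp only [hdA, hdB, Finset.sum_sub_distrib, Finset.sum_add_distrib, ← Finset.mul_sum]
      ring
    have hdvd : (4 : ℤ) ∣ ((∑ i, dA i) + ∑ p ∈ P2 m, dB p) := by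
      apply dvd_add
      · apply Finset.dvd_sum
        intro i _
        refine ⟨-(hat x i * hat y i * vB i i), ?_⟩
        rw [hdA]
        simp only
        rw [hhatadd, val_add_int]
        simp only [hhat]
        ring
      · apply Finset.dvd_sum
        intro p _
        obtain ⟨c, hc⟩ := brkt (x p.1) (y p.1) (x p.2) (y p.2)
        refine ⟨c * vB p.1 p.2, ?_⟩
        have : dB p = 2 * ((((x p.1 + y p.1).val : ℤ)) * (((x p.2 + y p.2).val : ℤ))
            - ((x p.1).val : ℤ) * ((x p.2).val : ℤ)
            - ((y p.1).val : ℤ) * ((y p.2).val : ℤ)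
            - ((x p.1).val : ℤ) * ((y p.2).val : ℤ)
            - ((x p.2).val : ℤ) * ((y p.1).val : ℤ)) * vB p.1 p.2 := by
          rw [hdB]
          simp only
          rw [hhatadd, hhatadd]
          simp only [hhat]
          ring
        rw [this, hc]
        ring
    obtain ⟨e, he⟩ := hdvd
    have hsum : T (x + y) = T x + T y + 2 * Bz + 4 * e := by rw [hkey, he]
    have hcast : ((Bz : ℤ) : ZMod 2) = ∑ i, ∑ j, x i * Bm i j * y j := by
      rw [hBzdef]
      push_cast
      simp [hhat, hvB, int_cast_val]
    calc Complex.I ^ T (x + y)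
        = Complex.I ^ T x * Complex.I ^ T y * Complex.I ^ (2 * Bz)
            * Complex.I ^ (4 * e) := by
          rw [hsum, zpow_add₀ hI, zpow_add₀ hI, zpow_add₀ hI]
      _ = Complex.I ^ T x * Complex.I ^ T y
            * ((-1 : ℂ)) ^ (∑ i, ∑ j, x i * Bm i j * y j).val := by
          rw [_root_.zpow_mul, _root_.zpow_mul, hI2, hI4, _root_.one_zpow, mul_one,
            neg_one_zpow_cast, hcast]

lemma zmod2_cases : ∀ x : ZMod 2, x = 0 ∨ x = 1 := by decide

lemma zmod2_add_eq_zero : ∀ a b : ZMod 2, a + b = 0 → a = b := by decide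

lemma sgn_of_add_one (s t : ZMod 2) (h : s + t = 1) :
    ((-1 : ℂ)) ^ s.val = -((-1 : ℂ)) ^ t.val := by
  rcases zmod2_cases s with hs | hs <;> rcases zmod2_cases t with ht | ht <;>
    subst hs <;> subst ht <;> first
  | (exact absurd h (by decide))
  | simp [show ZMod.val (0 : ZMod 2) = 0 from rfl, show ZMod.val (1 : ZMod 2) = 1 from rfl]


set_option maxHeartbeats 1000000 in
/-- if `C ⊆ F_2^{2n}` is an `(n−k)`-dimensional subspace,
self-orthogonal for the symplectic inner product, and every element of
`C^{⊥s} \ C` has quantum weight at least `d`, then there is an `[[n, k, d]]`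
qubit code: a subspace `Q ⊆ ℂ^{2^n}` with `dim_ℂ Q = 2^k` satisfying the
Knill–Laflamme condition for `d`. -/
theorem statement9 (n k d : ℕ) (hk : k ≤ n) (hd : 1 ≤ d)
    (C : Submodule (ZMod 2) ((Fin n → ZMod 2) × (Fin n → ZMod 2)))
    (hdim : Module.finrank (ZMod 2) C = n - k)
    (hself : ∀ u ∈ C, ∀ v ∈ C, sympl n u v = 0)
    (hwt : ∀ u : (Fin n → ZMod 2) × (Fin n → ZMod 2),
        (∀ c ∈ C, sympl n u c = 0) → u ∉ C → d ≤ wQ n u.1 u.2) :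
    ∃ Q : Submodule ℂ ((Fin n → ZMod 2) → ℂ),
      Module.finrank ℂ Q = 2 ^ k ∧
      ∀ a b : Fin n → ZMod 2, wQ n a b ≤ d - 1 →
        ∀ φ ∈ Q, ∀ ψ ∈ Q, star φ ⬝ᵥ ψ = 0 →
          star φ ⬝ᵥ (Xop n a * Zop n b).mulVec ψ = 0 := by
  classical
  set m := n - k with hm
  haveI : Fintype C := Fintype.ofFinite C
  let bC : Module.Basis (Fin m) (ZMod 2) C := Module.finBasisOfFinrankEq (ZMod 2) C hdim
  set Bl : C → C → ZMod 2 := fun c c' =>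
    ((c : (Fin n → ZMod 2) × (Fin n → ZMod 2))).2 ⬝ᵥ
      ((c' : (Fin n → ZMod 2) × (Fin n → ZMod 2))).1 with hBl
  set Bm : Fin m → Fin m → ZMod 2 := fun i j => Bl (bC i) (bC j) with hBmdef
  have hBmsym : ∀ i j, Bm i j = Bm j i := by
    intro i j
    have h := hself (bC j).1 (bC j).2 (bC i).1 (bC i).2
    apply zmod2_add_eq_zero
    calc Bm i j + Bm j i
        = (bC j).1.1 ⬝ᵥ (bC i).1.2 + (bC i).1.1 ⬝ᵥ (bC j).1.2 := by
          simp only [hBmdef, hBl]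
          rw [dotProduct_comm, dotProduct_comm ((bC j).1.2)]
      _ = 0 := h
  have hBl_expand : ∀ c c' : C, Bl c c'
      = ∑ i, ∑ j, (bC.repr c i) * Bm i j * (bC.repr c' j) := by
    intro c c'
    have h1 : (c : (Fin n → ZMod 2) × (Fin n → ZMod 2))
        = ∑ i, bC.repr c i • ((bC i : (Fin n → ZMod 2) × (Fin n → ZMod 2))) := by
      conv_lhs => rw [← bC.sum_repr c]
      simp only [Submodule.coe_sum, Submodule.coe_smul]
    have h1' : (c' : (Fin n → ZMod 2) × (Fin n → ZMod 2))
        = ∑ j, bC.repr c' j • ((bC j : (Fin n → ZMod 2) × (Fin n → ZMod 2))) := by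
      conv_lhs => rw [← bC.sum_repr c']
      simp only [Submodule.coe_sum, Submodule.coe_smul]
    have h2x : ∀ xx, (c : (Fin n → ZMod 2) × (Fin n → ZMod 2)).2 xx
        = ∑ i, bC.repr c i * ((bC i : (Fin n → ZMod 2) × (Fin n → ZMod 2))).2 xx := by
      intro xx
      have hs : (∑ i, bC.repr c i • ((bC i : (Fin n → ZMod 2) × (Fin n → ZMod 2)))).2
          = ∑ i, (bC.repr c i • ((bC i : (Fin n → ZMod 2) × (Fin n → ZMod 2)))).2 :=
        map_sum (AddMonoidHom.snd _ _) _ _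
      rw [h1, hs]
      simp [Finset.sum_apply]
    have h3x : ∀ xx, (c' : (Fin n → ZMod 2) × (Fin n → ZMod 2)).1 xx
        = ∑ j, bC.repr c' j * ((bC j : (Fin n → ZMod 2) × (Fin n → ZMod 2))).1 xx := by
      intro xx
      have hs : (∑ j, bC.repr c' j • ((bC j : (Fin n → ZMod 2) × (Fin n → ZMod 2)))).1
          = ∑ j, (bC.repr c' j • ((bC j : (Fin n → ZMod 2) × (Fin n → ZMod 2)))).1 :=
        map_sum (AddMonoidHom.fst _ _) _ _
      rw [h1', hs]
      simp [Finset.sum_apply]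
    have key : ∀ (i : Fin m) (j : Fin m),
        (∑ xx, (bC.repr c i * ((bC i : (Fin n → ZMod 2) × (Fin n → ZMod 2))).2 xx)
          * (bC.repr c' j * ((bC j : (Fin n → ZMod 2) × (Fin n → ZMod 2))).1 xx))
          = bC.repr c i * Bm i j * bC.repr c' j := by
      intro i j
      simp only [hBmdef, hBl, dotProduct, Finset.mul_sum, Finset.sum_mul]
      apply Finset.sum_congr rfl
      intro xx _
      ring
    calc Bl c c'
        = ∑ xx, (c : (Fin n → ZMod 2) × (Fin n → ZMod 2)).2 xx
            * (c' : (Fin n → ZMod 2) × (Fin n → ZMod 2)).1 xx := by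
          simp only [hBl, dotProduct]
      _ = ∑ xx, (∑ i, bC.repr c i * ((bC i : (Fin n → ZMod 2) × (Fin n → ZMod 2))).2 xx)
            * (∑ j, bC.repr c' j * ((bC j : (Fin n → ZMod 2) × (Fin n → ZMod 2))).1 xx) := by
          apply Finset.sum_congr rfl
          intro xx _
          rw [h2x, h3x]
      _ = ∑ xx, ∑ i, ∑ j,
            (bC.repr c i * ((bC i : (Fin n → ZMod 2) × (Fin n → ZMod 2))).2 xx)
            * (bC.repr c' j * ((bC j : (Fin n → ZMod 2) × (Fin n → ZMod 2))).1 xx) := by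
          apply Finset.sum_congr rfl
          intro xx _
          rw [Finset.sum_mul_sum]
      _ = ∑ i, ∑ xx, ∑ j,
            (bC.repr c i * ((bC i : (Fin n → ZMod 2) × (Fin n → ZMod 2))).2 xx)
            * (bC.repr c' j * ((bC j : (Fin n → ZMod 2) × (Fin n → ZMod 2))).1 xx) :=
          Finset.sum_comm
      _ = ∑ i, ∑ j, ∑ xx,
            (bC.repr c i * ((bC i : (Fin n → ZMod 2) × (Fin n → ZMod 2))).2 xx)
            * (bC.repr c' j * ((bC j : (Fin n → ZMod 2) × (Fin n → ZMod 2))).1 xx) := by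
          exact Finset.sum_congr rfl fun i _ => Finset.sum_comm
      _ = ∑ i, ∑ j, (bC.repr c i) * Bm i j * (bC.repr c' j) := by
          exact Finset.sum_congr rfl fun i _ => Finset.sum_congr rfl fun j _ => key i j
  obtain ⟨ε₀, hε00, hε0unit, hε0mul⟩ := exists_eps m Bm hBmsym
  set ε : C → ℂ := fun c => ε₀ (fun i => bC.repr c i) with hε
  have hεzero : ε 0 = 1 := by
    have h0 : (fun i => bC.repr (0 : C) i) = (0 : Fin m → ZMod 2) := by
      funext i; simp
    rw [hε]
    simp only
    rw [h0, hε00]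
  have hεunit : ∀ c, ε c * (starRingEnd ℂ) (ε c) = 1 := fun c => hε0unit _
  have hεmul : ∀ c c', ε (c + c') = ε c * ε c' * ((-1 : ℂ)) ^ (Bl c c').val := by
    intro c c'
    rw [hε]
    simp only
    have hadd : (fun i => bC.repr (c + c') i)
        = (fun i => bC.repr c i) + fun i => bC.repr c' i := by
      funext i; simp
    rw [hadd, hε0mul, hBl_expand]
  set Nm : C → Matrix (Fin n → ZMod 2) (Fin n → ZMod 2) ℂ :=
    fun c => ε c • Eop n c.1 with hNm
  have hNmul : ∀ c c' : C, Nm c * Nm c' = Nm (c + c') := by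
    intro c c'
    rw [hNm]
    simp only
    rw [Matrix.smul_mul, Matrix.mul_smul, Eop_mul, hεmul]
    have hcoe : ((c + c' : C) : (Fin n → ZMod 2) × (Fin n → ZMod 2)) = c.1 + c'.1 := rfl
    all_goals rw [smul_smul, smul_smul]
    all_goals rw [hcoe]
    all_goals congr 1
    all_goals simp only [hBl]
    all_goals ring
  have hN0 : Nm 0 = 1 := by
    rw [hNm]
    simp only [hεzero]
    rw [show ((0 : C) : (Fin n → ZMod 2) × (Fin n → ZMod 2)) = 0 from rfl, Eop_zero, one_smul]
  have hNherm : ∀ c, (Nm c)ᴴ = Nm c := by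
    intro c
    rw [hNm]
    simp only
    rw [Matrix.conjTranspose_smul, Eop_conjTranspose, smul_smul]
    congr 1
    have hcc : c + c = (0 : C) := by
      have h2 : c + c = (1 + 1 : ZMod 2) • c := by rw [add_smul, one_smul]
      rw [h2, show (1 + 1 : ZMod 2) = 0 by decide, zero_smul]
    have h1 := hεmul c c
    rw [hcc, hεzero] at h1
    have hss : ((-1 : ℂ)) ^ (Bl c c).val * ((-1 : ℂ)) ^ (Bl c c).val = 1 := by
      rw [← mul_pow]; norm_num
    have hu := hεunit c
    have hexp : ((c : (Fin n → ZMod 2) × (Fin n → ZMod 2)).2 ⬝ᵥ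
        (c : (Fin n → ZMod 2) × (Fin n → ZMod 2)).1) = Bl c c := by simp only [hBl]
    rw [hexp]
    have hst : star (ε c) = (starRingEnd ℂ) (ε c) := rfl
    rw [hst]
    linear_combination (starRingEnd ℂ (ε c) * ((-1 : ℂ)) ^ (Bl c c).val) * h1
      + (starRingEnd ℂ (ε c) * ε c * ε c) * hss + (ε c) * hu
  set Pm : Matrix (Fin n → ZMod 2) (Fin n → ZMod 2) ℂ :=
    ((2 : ℂ) ^ m)⁻¹ • ∑ c : C, Nm c with hPm
  have hcard : (Fintype.card C : ℂ) = (2 : ℂ) ^ m := by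
    rw [Module.card_fintype bC]
    simp [ZMod.card]
  have h2m : ((2 : ℂ) ^ m) ≠ 0 := by
    apply pow_ne_zero
    norm_num
  have hNP : ∀ c₀ : C, Nm c₀ * Pm = Pm := by
    intro c₀
    rw [hPm, Matrix.mul_smul, Finset.mul_sum]
    congr 1
    rw [show (∑ c : C, Nm c₀ * Nm c) = ∑ c : C, Nm (c₀ + c) from
      Finset.sum_congr rfl fun c _ => hNmul c₀ c]
    exact Fintype.sum_equiv (Equiv.addLeft c₀) _ _ (fun c => rfl)
  have hPN : ∀ c₀ : C, Pm * Nm c₀ = Pm := by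
    intro c₀
    rw [hPm, Matrix.smul_mul, Finset.sum_mul]
    congr 1
    rw [show (∑ c : C, Nm c * Nm c₀) = ∑ c : C, Nm (c + c₀) from
      Finset.sum_congr rfl fun c _ => hNmul c c₀]
    exact Fintype.sum_equiv (Equiv.addRight c₀) _ _ (fun c => rfl)
  have hPP : Pm * Pm = Pm := by
    nth_rewrite 1 [hPm]
    rw [Matrix.smul_mul, Finset.sum_mul]
    rw [show (∑ c : C, Nm c * Pm) = ∑ _c : C, Pm from
      Finset.sum_congr rfl fun c _ => hNP c]
    rw [Finset.sum_const, Finset.card_univ, ← Nat.cast_smul_eq_nsmul ℂ, smul_smul,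
      hcard, inv_mul_cancel₀ h2m, one_smul]
  have hPH : Pmᴴ = Pm := by
    rw [hPm, Matrix.conjTranspose_smul, Matrix.conjTranspose_sum]
    congr 1
    · simp [star_inv₀, star_pow, Complex.star_def, Complex.conj_ofNat]
    · exact Finset.sum_congr rfl fun c _ => hNherm c
  have htr : Matrix.trace Pm = (2 : ℂ) ^ k := by
    rw [hPm, Matrix.trace_smul, Matrix.trace_sum]
    have hts : ∑ c : C, Matrix.trace (Nm c) = (2 : ℂ) ^ n := by
      rw [Finset.sum_eq_single (0 : C)]
      · rw [hNm]
        simp only [Matrix.trace_smul, hεzero]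
        rw [show ((0 : C) : (Fin n → ZMod 2) × (Fin n → ZMod 2)) = 0 from rfl,
          Eop_trace, if_pos rfl, one_smul]
      · intro c _ hc
        rw [hNm]
        simp only [Matrix.trace_smul, Eop_trace]
        rw [if_neg, smul_zero]
        intro h0
        exact hc (Subtype.ext h0)
      · intro h
        exact absurd (Finset.mem_univ _) h
    rw [hts, smul_eq_mul]
    have hpow : (2 : ℂ) ^ n = 2 ^ m * 2 ^ k := by
      rw [← pow_add]
      congr 1
      omega
    rw [hpow, ← mul_assoc, inv_mul_cancel₀ h2m, one_mul]
  set f := Matrix.mulVecLin Pm with hf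
  have hff : f ∘ₗ f = f := by rw [hf, ← Matrix.mulVecLin_mul, hPP]
  set Q : Submodule ℂ ((Fin n → ZMod 2) → ℂ) := LinearMap.range f with hQ
  have hproj : LinearMap.IsProj Q f := by
    refine ⟨fun x => LinearMap.mem_range_self f x, ?_⟩
    rintro x ⟨y, rfl⟩
    rw [← LinearMap.comp_apply, hff]
  have hrank : Module.finrank ℂ Q = 2 ^ k := by
    have ht := LinearMap.IsProj.trace hproj
    have htf : LinearMap.trace ℂ _ f = Matrix.trace Pm := by
      rw [LinearMap.trace_eq_matrix_trace ℂ (Pi.basisFun ℂ (Fin n → ZMod 2)) f,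
        LinearMap.toMatrix_eq_toMatrix', hf, ← Matrix.toLin'_apply',
        LinearMap.toMatrix'_toLin']
    rw [htf, htr] at ht
    have hcast2 : ((2 ^ k : ℕ) : ℂ) = ((Module.finrank ℂ Q : ℕ) : ℂ) := by
      rw [← ht]; push_cast; ring
    exact (Nat.cast_inj.mp hcast2).symm
  refine ⟨Q, hrank, ?_⟩
  intro a b hw φ hφ ψ hψ horth
  rw [XZ_eq_Eop]
  set u : (Fin n → ZMod 2) × (Fin n → ZMod 2) := (a, b) with hu
  obtain ⟨x, hx⟩ := hφ
  obtain ⟨y, hy⟩ := hψ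
  by_cases huC : u ∈ C
  · set c₀ : C := ⟨u, huC⟩ with hc₀
    have hεne : ε c₀ ≠ 0 := by
      intro h0
      have := hεunit c₀
      rw [h0] at this
      simp at this
    have hEP : ε c₀ • (Eop n u).mulVec ψ = ψ := by
      rw [← hy]
      show ε c₀ • (Eop n u).mulVec (Pm.mulVec y) = Pm.mulVec y
      rw [Matrix.mulVec_mulVec, ← Matrix.smul_mulVec, ← Matrix.smul_mul]
      rw [show ε c₀ • Eop n u = Nm c₀ from rfl, hNP]
    have hEψ : (Eop n u).mulVec ψ = (ε c₀)⁻¹ • ψ := by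
      have h' := congrArg (fun z => (ε c₀)⁻¹ • z) hEP
      rw [smul_smul, inv_mul_cancel₀ hεne, one_smul] at h'
      rw [h']
    rw [hEψ, dotProduct_smul, horth, smul_zero]
  · have hlt : wQ n a b < d := by omega
    have hnall : ¬ (∀ c ∈ C, sympl n u c = 0) := by
      intro hall
      have := hwt u hall huC
      simp only [hu] at this
      omega
    push_neg at hnall
    obtain ⟨cv, hcvC, hcvne⟩ := hnall
    have hcv1 : sympl n u cv = 1 := (zmod2_cases _).resolve_left hcvne
    set c₀ : C := ⟨cv, hcvC⟩ with hc₀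
    have hanti : Eop n u * Eop n cv = -(Eop n cv * Eop n u) := by
      rw [Eop_mul, Eop_mul, add_comm cv u, ← neg_smul]
      congr 1
      apply sgn_of_add_one
      rw [dotProduct_comm, dotProduct_comm cv.2, add_comm]
      exact hcv1
    have hENc : Eop n u * Nm c₀ = -(Nm c₀ * Eop n u) := by
      rw [hNm]
      simp only
      rw [Matrix.mul_smul, Matrix.smul_mul, hanti, smul_neg]
    have hA : Pm * (Eop n u * Pm) = -(Pm * (Eop n u * Pm)) := by
      calc Pm * (Eop n u * Pm) = Pm * (Eop n u * (Nm c₀ * Pm)) := by rw [hNP]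
        _ = (Pm * (Eop n u * Nm c₀)) * Pm := by
            rw [mul_assoc, mul_assoc]
        _ = (Pm * (-(Nm c₀ * Eop n u))) * Pm := by rw [hENc]
        _ = -((Pm * Nm c₀) * (Eop n u * Pm)) := by
            rw [mul_neg, Matrix.neg_mul]
            congr 1
            rw [← mul_assoc, mul_assoc]
        _ = -(Pm * (Eop n u * Pm)) := by rw [hPN]
    have hA0 : Pm * (Eop n u * Pm) = 0 := by
      have h2 : (2 : ℂ) • (Pm * (Eop n u * Pm)) = 0 := by
        rw [two_smul]
        nth_rewrite 2 [hA]
        simp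
      rcases smul_eq_zero.mp h2 with h | h
      · exact absurd h (by norm_num)
      · exact h
    rw [← hx, ← hy]
    show star (Pm.mulVec x) ⬝ᵥ (Eop n u).mulVec (Pm.mulVec y) = 0
    rw [Matrix.star_mulVec, Matrix.mulVec_mulVec, ← Matrix.dotProduct_mulVec,
      Matrix.mulVec_mulVec, hPH, ← mul_assoc, mul_assoc, hA0, Matrix.zero_mulVec,
      dotProduct_zero]
end

section
/- (CSS construction) Let C_1 and C_2 be linear codes in F^n of dimensions k_1 and k_2 respectively, with k_1 + k_2 ≥ n and C_1^⊥ ⊆ C_2 (Euclidean duals). Let d = min{ wH(C_2 \ C_1^⊥), wH(C_1 \ C_2^⊥) }. Then there exists an [[n, k_1 + k_2 − n, d]]_q code, i.e., a subspace Q of ℂ^{q^n} of dimension q^{k_1+k_2−n} satisfying the Knill–Laflamme condition for d. -/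
open Matrix

open scoped BigOperators

/-- The error operator `X(a)`, acting on `ℂ^{q^n}` (with coordinates indexed by
`F^n`) by `X(a) e_v = e_{a+v}`. -/
noncomputable def Xq (F : Type) [Field F] [Fintype F] [DecidableEq F]
    (n : ℕ) (a : Fin n → F) : Matrix (Fin n → F) (Fin n → F) ℂ :=
  Matrix.of fun w v => if w = a + v then 1 else 0

/-- The error operator `Z(b)`, acting on `ℂ^{q^n}` by
`Z(b) e_v = ω^{Tr(b·v)} e_v`, where `ω = exp(2πi/p)` and the absolute trace
`Tr(b·v) ∈ F_p` is lifted to `{0,…,p−1} ⊆ ℤ`. -/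
noncomputable def Zq (p : ℕ) (F : Type) [Field F] [Fintype F] [DecidableEq F]
    [CharP F p] [Algebra (ZMod p) F]
    (n : ℕ) (b : Fin n → F) : Matrix (Fin n → F) (Fin n → F) ℂ :=
  Matrix.of fun w v =>
    if w = v then
      Complex.exp (2 * Real.pi * Complex.I / p) ^
        (Algebra.trace (ZMod p) F (b ⬝ᵥ v)).val
    else 0

/-- The quantum weight of `(a|b)`: the number of indices `i` with `a_i ≠ 0` or
`b_i ≠ 0`. -/
noncomputable def wQq (F : Type) [Zero F] (n : ℕ) (a b : Fin n → F) : ℕ :=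
  {i : Fin n | a i ≠ 0 ∨ b i ≠ 0}.ncard

/-- The Hamming weight of a vector in `F^n`. -/
noncomputable def wH (F : Type) [Zero F] (n : ℕ) (x : Fin n → F) : ℕ :=
  {i : Fin n | x i ≠ 0}.ncard

/-- `Q` is an `[[n, k, d]]_q` code (`q = |F|`): a subspace of `ℂ^{q^n}` of
dimension `q^k` satisfying the Knill–Laflamme condition for `d`, i.e. for all
errors `X(a)Z(b)` of quantum weight at most `d − 1` and all orthogonal
`φ, ψ ∈ Q` one has `⟨φ, X(a)Z(b) ψ⟩ = 0`. -/
noncomputable def IsQECC (p : ℕ) (F : Type) [Field F] [Fintype F] [DecidableEq F]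
    [CharP F p] [Algebra (ZMod p) F]
    (n k d : ℕ) (Q : Submodule ℂ ((Fin n → F) → ℂ)) : Prop :=
  Module.finrank ℂ Q = Fintype.card F ^ k ∧
  ∀ a b : Fin n → F, wQq F n a b ≤ d - 1 →
    ∀ φ ∈ Q, ∀ ψ ∈ Q, star φ ⬝ᵥ ψ = 0 →
      star φ ⬝ᵥ (Xq F n a * Zq p F n b).mulVec ψ = 0

/-- The Euclidean dual of a linear code `C ⊆ F^n`. -/
def dualE (F : Type) [Field F] (n : ℕ) (C : Submodule F (Fin n → F)) :
    Set (Fin n → F) :=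
  {x | ∀ c ∈ C, x ⬝ᵥ c = 0}

/-! ### Auxiliary material for the CSS construction -/

open scoped Classical
set_option linter.unusedSectionVars false
set_option maxHeartbeats 1000000
set_option synthInstance.maxHeartbeats 1000000

section ZetAux

variable (p : ℕ) [Fact p.Prime]

noncomputable def zet (p : ℕ) : ℂ := Complex.exp (2 * Real.pi * Complex.I / p)

lemma zet_pow_p : (zet p) ^ p = 1 := by
  have hp : p ≠ 0 := (Fact.out : p.Prime).ne_zero
  exact (Complex.isPrimitiveRoot_exp p hp).pow_eq_one

lemma zet_val_add (s t : ZMod p) :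
    zet p ^ (s + t).val = zet p ^ s.val * zet p ^ t.val := by
  haveI : NeZero p := ⟨(Fact.out : p.Prime).ne_zero⟩
  rw [ZMod.val_add, ← pow_eq_pow_mod _ (zet_pow_p p), pow_add]

lemma zet_pow_ne_one {t : ZMod p} (ht : t ≠ 0) : zet p ^ t.val ≠ 1 := by
  haveI : NeZero p := ⟨(Fact.out : p.Prime).ne_zero⟩
  have hp : p ≠ 0 := (Fact.out : p.Prime).ne_zero
  have h := Complex.isPrimitiveRoot_exp p hp
  exact h.pow_ne_one_of_pos_of_lt (Nat.pos_of_ne_zero (fun h0 => ht (by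
    rwa [ZMod.val_eq_zero] at h0))).ne' (ZMod.val_lt t)

end ZetAux

section DotB

variable (F : Type) [Field F] [Fintype F] [DecidableEq F] (n : ℕ)

noncomputable def dotB : LinearMap.BilinForm F (Fin n → F) :=
  Matrix.toBilin' (1 : Matrix (Fin n) (Fin n) F)

lemma dotB_apply (x y : Fin n → F) : dotB F n x y = x ⬝ᵥ y := by
  rw [dotB, Matrix.toBilin'_apply', one_mulVec]

lemma dotB_refl : (dotB F n).IsRefl := by
  intro x y h
  rw [dotB_apply] at h ⊢
  rwa [dotProduct_comm]

lemma dotB_nondeg : (dotB F n).Nondegenerate :=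
  Matrix.Nondegenerate.toBilin' (Matrix.nondegenerate_of_det_ne_zero (by simp))

lemma dualE_eq (C : Submodule F (Fin n → F)) :
    dualE F n C = ((dotB F n).orthogonal C : Set (Fin n → F)) := by
  ext x
  simp only [dualE, Set.mem_setOf_eq, SetLike.mem_coe,
    LinearMap.BilinForm.mem_orthogonal_iff, LinearMap.BilinForm.IsOrtho, dotB_apply]
  exact forall₂_congr fun c _ => by rw [dotProduct_comm]

lemma finrank_dotB_orthogonal (C : Submodule F (Fin n → F)) :
    Module.finrank F ((dotB F n).orthogonal C) = n - Module.finrank F C := by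
  rw [LinearMap.BilinForm.finrank_orthogonal (dotB_nondeg F n)]
  simp

lemma dotB_orthogonal_orthogonal (C : Submodule F (Fin n → F)) :
    (dotB F n).orthogonal ((dotB F n).orthogonal C) = C :=
  LinearMap.BilinForm.orthogonal_orthogonal (dotB_nondeg F n) (dotB_refl F n) C

end DotB

section CharSum

variable (p : ℕ) [Fact p.Prime] (F : Type) [Field F] [Fintype F] [DecidableEq F]
  [CharP F p] [Algebra (ZMod p) F] (n : ℕ)

/-- Sum of a nontrivial character over a subspace vanishes. -/
lemma char_sum_zero (W : Submodule F (Fin n → F)) (b : Fin n → F)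
    (hb : ∃ x ∈ W, Algebra.trace (ZMod p) F (b ⬝ᵥ x) ≠ 0) :
    ∑ x : W, zet p ^ (Algebra.trace (ZMod p) F (b ⬝ᵥ (x : Fin n → F))).val = 0 := by
  let ψ : AddChar W ℂ :=
    { toFun := fun x => zet p ^ (Algebra.trace (ZMod p) F (b ⬝ᵥ (x : Fin n → F))).val
      map_zero_eq_one' := by simp
      map_add_eq_mul' := by
        intro x y
        simp only [Submodule.coe_add, dotProduct_add, map_add]
        exact zet_val_add p _ _ }
  have hψ : ψ ≠ 0 := by
    rw [AddChar.ne_zero_iff]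
    obtain ⟨x, hxW, hx⟩ := hb
    exact ⟨⟨x, hxW⟩, zet_pow_ne_one p hx⟩
  exact AddChar.sum_eq_zero_iff_ne_zero.mpr hψ

lemma XZ_apply (a b : Fin n → F) (w v : Fin n → F) :
    (Xq F n a * Zq p F n b) w v
      = if w = a + v then zet p ^ (Algebra.trace (ZMod p) F (b ⬝ᵥ v)).val else 0 := by
  rw [Matrix.mul_apply]
  rw [Finset.sum_eq_single v]
  · simp [Xq, Zq, zet]
  · intro u _ hu
    simp [Xq, Zq, hu]
  · simp

lemma mulVec_XZ (a b : Fin n → F) (ψ : (Fin n → F) → ℂ) (w : Fin n → F) :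
    (Xq F n a * Zq p F n b).mulVec ψ w
      = zet p ^ (Algebra.trace (ZMod p) F (b ⬝ᵥ (w - a))).val * ψ (w - a) := by
  rw [Matrix.mulVec, dotProduct]
  rw [Finset.sum_eq_single (w - a)]
  · rw [XZ_apply]
    simp
  · intro v _ hv
    rw [XZ_apply]
    have : ¬ (w = a + v) := by
      intro h; apply hv; rw [h]; abel
    simp [this]
  · simp

/-- reindex a sum supported on a coset `t + D`. -/
lemma coset_sum (D : Submodule F (Fin n → F)) (t : Fin n → F) (H : (Fin n → F) → ℂ) :
    ∑ w : Fin n → F, (if w - t ∈ D then H w else 0) = ∑ x : D, H (t + x) := by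
  have e1 : ∑ w : Fin n → F, (if (w : Fin n → F) ∈ D then H (t + w) else 0)
      = ∑ w : Fin n → F, (if w - t ∈ D then H w else 0) :=
    Fintype.sum_equiv (Equiv.addLeft t) _ _ (fun w => by simp)
  rw [← e1, ← Finset.sum_filter]
  exact Finset.sum_subtype _ (by simp) _

end CharSum

section Span

variable {V : Type*} [Fintype V] [DecidableEq V] {ι κ : Type*}

lemma pairing_zero_left (y : V → ℂ) (f : ι → (V → ℂ))
    (h : ∀ i, star (f i) ⬝ᵥ y = 0) :
    ∀ φ ∈ Submodule.span ℂ (Set.range f), star φ ⬝ᵥ y = 0 := by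
  intro φ hφ
  induction hφ using Submodule.span_induction with
  | mem x hx => obtain ⟨i, rfl⟩ := hx; exact h i
  | zero => simp
  | add x z hx hz ihx ihz => rw [star_add, add_dotProduct, ihx, ihz, add_zero]
  | smul c x hx ih => rw [star_smul, smul_dotProduct, ih, smul_zero]

lemma span_pairing_zero (f : ι → (V → ℂ)) (g : κ → (V → ℂ))
    (h : ∀ i j, star (f i) ⬝ᵥ g j = 0) :
    ∀ φ ∈ Submodule.span ℂ (Set.range f), ∀ ψ ∈ Submodule.span ℂ (Set.range g),
      star φ ⬝ᵥ ψ = 0 := by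
  intro φ hφ ψ hψ
  induction hψ using Submodule.span_induction with
  | mem x hx =>
    obtain ⟨j, rfl⟩ := hx
    exact pairing_zero_left (g j) f (fun i => h i j) φ hφ
  | zero => simp
  | add x z hx hz ihx ihz => rw [dotProduct_add, ihx, ihz, add_zero]
  | smul c x hx ih => rw [dotProduct_smul, ih, smul_zero]

lemma mulVec_mem_span (E : Matrix V V ℂ) (f : ι → (V → ℂ)) {ψ : V → ℂ}
    (hψ : ψ ∈ Submodule.span ℂ (Set.range f)) :
    E.mulVec ψ ∈ Submodule.span ℂ (Set.range fun i => E.mulVec (f i)) := by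
  have h1 : E.mulVec ψ ∈ Submodule.map E.mulVecLin (Submodule.span ℂ (Set.range f)) :=
    ⟨ψ, hψ, rfl⟩
  rw [Submodule.map_span, ← Set.range_comp] at h1
  exact h1

lemma mulVec_id_on_span (E : Matrix V V ℂ) (f : ι → (V → ℂ))
    (h : ∀ i, E.mulVec (f i) = f i) :
    ∀ ψ ∈ Submodule.span ℂ (Set.range f), E.mulVec ψ = ψ := by
  intro ψ hψ
  induction hψ using Submodule.span_induction with
  | mem x hx => obtain ⟨i, rfl⟩ := hx; exact h i
  | zero => simp [Matrix.mulVec_zero]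
  | add x z hx hz ihx ihz => rw [Matrix.mulVec_add, ihx, ihz]
  | smul c x hx ih => rw [Matrix.mulVec_smul, ih]

end Span

section Core

variable (p : ℕ) [Fact p.Prime] (F : Type) [Field F] [Fintype F] [DecidableEq F]
  [CharP F p] [Algebra (ZMod p) F] (n : ℕ)

/-- indicator of the coset `c + D`. -/
noncomputable def cosetInd (F : Type) [Field F] [Fintype F] [DecidableEq F] (n : ℕ)
    (D : Submodule F (Fin n → F)) (c : Fin n → F) : (Fin n → F) → ℂ :=
  fun w => if w - c ∈ D then 1 else 0

variable (D C2 : Submodule F (Fin n → F))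

/-- generators of the CSS code: coset indicators. -/
noncomputable def cssGen : (C2 ⧸ D.comap C2.subtype) → ((Fin n → F) → ℂ) :=
  fun z => cosetInd F n D (z.out : Fin n → F)

lemma mk_out (z : C2 ⧸ D.comap C2.subtype) : Submodule.Quotient.mk z.out = z :=
  Quotient.out_eq z

lemma out_sub_mem_iff (z z' : C2 ⧸ D.comap C2.subtype) :
    ((z'.out : Fin n → F) - (z.out : Fin n → F) ∈ D) ↔ z' = z := by
  constructor
  · intro h
    rw [← mk_out F n D C2 z', ← mk_out F n D C2 z]
    rw [Submodule.Quotient.eq]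
    simpa using h
  · rintro rfl
    simp

lemma cssGen_linearIndependent : LinearIndependent ℂ (cssGen F n D C2) := by
  rw [linearIndependent_iff']
  intro s g hsum z hz
  have h := congrFun hsum (z.out : Fin n → F)
  simp only [Finset.sum_apply, Pi.smul_apply, Pi.zero_apply, smul_eq_mul] at h
  rw [Finset.sum_eq_single z] at h
  · rw [cssGen, cosetInd] at h
    simpa using h
  · intro i _ hiz
    have : ¬ ((z.out : Fin n → F) - (i.out : Fin n → F) ∈ D) := by
      rw [out_sub_mem_iff]; exact fun hh => hiz hh.symm
    rw [cssGen, cosetInd, if_neg this, mul_zero]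
  · intro hzs; exact absurd hz hzs

lemma star_cosetInd (c : Fin n → F) : star (cosetInd F n D c) = cosetInd F n D c := by
  funext w
  simp [cosetInd, apply_ite (star : ℂ → ℂ)]

/-- The generator pairing sum. -/
lemma gen_pairing (a b : Fin n → F) (c c' : Fin n → F) :
    star (cosetInd F n D c') ⬝ᵥ
      (fun w => zet p ^ (Algebra.trace (ZMod p) F (b ⬝ᵥ (w - a))).val *
        cosetInd F n D c (w - a))
    = ∑ w : Fin n → F,
        (if w - (a + c) ∈ D then
          cosetInd F n D c' w * zet p ^ (Algebra.trace (ZMod p) F (b ⬝ᵥ (w - a))).val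
        else 0) := by
  rw [star_cosetInd, dotProduct]
  refine Finset.sum_congr rfl fun w _ => ?_
  simp only [cosetInd]
  have hmem : w - a - c ∈ D ↔ w - (a + c) ∈ D := by rw [sub_sub]
  by_cases h : w - (a + c) ∈ D
  · rw [if_pos h, if_pos (hmem.mpr h)]
    ring
  · rw [if_neg h, if_neg (fun hh => h (hmem.mp hh)), mul_zero, mul_zero]

/-- Case A: `b` pairs nontrivially with `D`: everything orthogonal. -/
lemma pairing_caseA (a b : Fin n → F) (c c' : Fin n → F)
    (hb : ∃ x ∈ D, Algebra.trace (ZMod p) F (b ⬝ᵥ x) ≠ 0) :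
    star (cosetInd F n D c') ⬝ᵥ
      (fun w => zet p ^ (Algebra.trace (ZMod p) F (b ⬝ᵥ (w - a))).val *
        cosetInd F n D c (w - a)) = 0 := by
  rw [gen_pairing, coset_sum]
  by_cases hδ : a + c - c' ∈ D
  · have h1 : ∀ x : D, cosetInd F n D c' (a + c + (x : Fin n → F)) = 1 := by
      intro x
      rw [cosetInd, if_pos]
      have : a + c + (x : Fin n → F) - c' = (a + c - c') + (x : Fin n → F) := by abel
      rw [this]
      exact D.add_mem hδ x.2
    have h2 : ∀ x : D, a + c + (x : Fin n → F) - a = c + (x : Fin n → F) := by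
      intro x; abel
    calc ∑ x : D, cosetInd F n D c' (a + c + (x : Fin n → F)) *
            zet p ^ (Algebra.trace (ZMod p) F (b ⬝ᵥ (a + c + (x : Fin n → F) - a))).val
        = ∑ x : D, zet p ^ (Algebra.trace (ZMod p) F (b ⬝ᵥ c)).val *
            zet p ^ (Algebra.trace (ZMod p) F (b ⬝ᵥ (x : Fin n → F))).val := by
          refine Finset.sum_congr rfl fun x _ => ?_
          rw [h1, h2, one_mul, dotProduct_add, map_add, zet_val_add]
      _ = zet p ^ (Algebra.trace (ZMod p) F (b ⬝ᵥ c)).val *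
            ∑ x : D, zet p ^ (Algebra.trace (ZMod p) F (b ⬝ᵥ (x : Fin n → F))).val := by
          rw [Finset.mul_sum]
      _ = 0 := by rw [char_sum_zero p F n D b hb, mul_zero]
  · refine Finset.sum_eq_zero fun x _ => ?_
    have : ¬ (a + c + (x : Fin n → F) - c' ∈ D) := by
      intro hh
      apply hδ
      have : a + c - c' = (a + c + (x : Fin n → F) - c') - (x : Fin n → F) := by abel
      rw [this]
      exact D.sub_mem hh x.2
    rw [cosetInd, if_neg this, zero_mul]

/-- Case B: `a` moves the support off `C2`. -/
lemma pairing_caseB (a b : Fin n → F) (c c' : Fin n → F)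
    (hDC2 : D ≤ C2) (hc : c ∈ C2) (hc' : c' ∈ C2) (ha : a ∉ C2) :
    star (cosetInd F n D c') ⬝ᵥ
      (fun w => zet p ^ (Algebra.trace (ZMod p) F (b ⬝ᵥ (w - a))).val *
        cosetInd F n D c (w - a)) = 0 := by
  rw [gen_pairing]
  refine Finset.sum_eq_zero fun w _ => ?_
  by_cases h : w - (a + c) ∈ D
  · rw [if_pos h, cosetInd]
    by_cases h' : w - c' ∈ D
    · exfalso
      apply ha
      have hw : w ∈ C2 := by
        have := C2.add_mem (hDC2 h') hc'
        simpa using this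
      have hwa : w - a ∈ C2 := by
        have := C2.add_mem (hDC2 h) hc
        have h2 : w - (a + c) + c = w - a := by abel
        rwa [h2] at this
      have : w - (w - a) ∈ C2 := C2.sub_mem hw hwa
      simpa using this
    · rw [if_neg h', zero_mul]
  · rw [if_neg h]

/-- Case C: identity action. -/
lemma mulVec_id (a b : Fin n → F) (c : Fin n → F)
    (hDC2 : D ≤ C2) (hc : c ∈ C2) (haD : a ∈ D)
    (hb2 : ∀ y ∈ C2, b ⬝ᵥ y = 0) :
    (fun w => zet p ^ (Algebra.trace (ZMod p) F (b ⬝ᵥ (w - a))).val *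
        cosetInd F n D c (w - a)) = cosetInd F n D c := by
  funext w
  have hmem : w - a - c ∈ D ↔ w - c ∈ D := by
    constructor
    · intro h
      have h2 : w - c = (w - a - c) + a := by abel
      rw [h2]; exact D.add_mem h haD
    · intro h
      have h2 : w - a - c = (w - c) - a := by abel
      rw [h2]; exact D.sub_mem h haD
  by_cases h : w - c ∈ D
  · have hw : w ∈ C2 := by
      have := C2.add_mem (hDC2 h) hc
      simpa using this
    have hwa : w - a ∈ C2 := C2.sub_mem hw (hDC2 haD)
    rw [cosetInd, cosetInd, if_pos (hmem.mpr h), if_pos h, hb2 _ hwa]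
    simp
  · rw [cosetInd, cosetInd, if_neg (fun hh => h (hmem.mp hh)), if_neg h, mul_zero]

end Core

/-- CSS construction: if `C_1, C_2 ⊆ F^n` are linear codes of
dimensions `k_1, k_2` with `k_1 + k_2 ≥ n` and `C_1^⊥ ⊆ C_2`, and
`d = min{wH(C_2 \ C_1^⊥), wH(C_1 \ C_2^⊥)}` (minimum Hamming weight over the
respective difference sets), then there is an `[[n, k_1 + k_2 − n, d]]_q`
code. -/
theorem statement10 (p : ℕ) [Fact p.Prime] (F : Type) [Field F] [Fintype F]
    [DecidableEq F] [CharP F p] [Algebra (ZMod p) F]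
    (n k1 k2 : ℕ) (hn : n ≤ k1 + k2)
    (C1 C2 : Submodule F (Fin n → F))
    (hk1 : Module.finrank F C1 = k1) (hk2 : Module.finrank F C2 = k2)
    (hnest : dualE F n C1 ⊆ (C2 : Set (Fin n → F))) :
    ∃ Q : Submodule ℂ ((Fin n → F) → ℂ),
      IsQECC p F n (k1 + k2 - n)
        (min (sInf (wH F n '' ((C2 : Set (Fin n → F)) \ dualE F n C1)))
             (sInf (wH F n '' ((C1 : Set (Fin n → F)) \ dualE F n C2)))) Q := by
  classical
  set D : Submodule F (Fin n → F) := (dotB F n).orthogonal C1 with hD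
  have hdual1 : dualE F n C1 = (D : Set (Fin n → F)) := dualE_eq F n C1
  have hDC2 : D ≤ C2 := fun x hx => hnest (by rw [hdual1]; exact hx)
  have hkD : Module.finrank F D = n - k1 := by
    rw [hD, finrank_dotB_orthogonal, hk1]
  have hk1n : k1 ≤ n := by
    rw [← hk1]
    have h := Submodule.finrank_le C1
    simpa using h
  set f : (C2 ⧸ D.comap C2.subtype) → ((Fin n → F) → ℂ) := cssGen F n D C2 with hf
  refine ⟨Submodule.span ℂ (Set.range f), ?_, ?_⟩
  · -- dimension count
    rw [finrank_span_eq_card (cssGen_linearIndependent F n D C2)]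
    have hcard : Fintype.card (C2 ⧸ D.comap C2.subtype)
        = Fintype.card F ^ Module.finrank F (C2 ⧸ D.comap C2.subtype) :=
      Module.card_eq_pow_finrank (K := F)
    have hfr : Module.finrank F (C2 ⧸ D.comap C2.subtype)
        + Module.finrank F (D.comap C2.subtype) = k2 := by
      rw [Submodule.finrank_quotient_add_finrank, hk2]
    have hcomap : Module.finrank F (D.comap C2.subtype) = n - k1 := by
      rw [(Submodule.comapSubtypeEquivOfLe hDC2).finrank_eq, hkD]
    have hfr2 : Module.finrank F (C2 ⧸ D.comap C2.subtype) = k1 + k2 - n := by omega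
    rw [hcard, hfr2]
  · intro a b hw φ hφ ψ hψ horth
    have hmv : ∀ (χ : (Fin n → F) → ℂ), (Xq F n a * Zq p F n b).mulVec χ
        = fun w => zet p ^ (Algebra.trace (ZMod p) F (b ⬝ᵥ (w - a))).val * χ (w - a) := by
      intro χ; funext w; exact mulVec_XZ p F n a b χ w
    by_cases hb1 : b ∈ C1
    · by_cases ha2 : a ∈ C2
      · -- identity case
        have haD : a ∈ D := by
          by_contra haD
          have hmem : a ∈ (C2 : Set (Fin n → F)) \ dualE F n C1 :=
            ⟨ha2, by rw [hdual1]; exact haD⟩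
          have h1 : sInf (wH F n '' ((C2 : Set (Fin n → F)) \ dualE F n C1)) ≤ wH F n a :=
            Nat.sInf_le ⟨a, hmem, rfl⟩
          have h2 : wH F n a ≤ wQq F n a b := by
            simp only [wH, wQq]
            exact Set.ncard_le_ncard (fun i hi => Or.inl hi) (Set.toFinite _)
          have h3 : min (sInf (wH F n '' ((C2 : Set (Fin n → F)) \ dualE F n C1)))
              (sInf (wH F n '' ((C1 : Set (Fin n → F)) \ dualE F n C2)))
              ≤ sInf (wH F n '' ((C2 : Set (Fin n → F)) \ dualE F n C1)) := min_le_left _ _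
          have hwa0 : wH F n a = 0 := by omega
          have ha0 : a = 0 := by
            funext i
            by_contra hai
            have hne : ({i : Fin n | a i ≠ 0}).Nonempty := ⟨i, hai⟩
            have hpos := (Set.ncard_pos (Set.toFinite _)).mpr hne
            simp only [wH] at hwa0
            omega
          exact haD (ha0 ▸ D.zero_mem)
        have hb2 : ∀ y ∈ C2, b ⬝ᵥ y = 0 := by
          by_contra hb2
          push_neg at hb2
          have hbm : b ∈ (C1 : Set (Fin n → F)) \ dualE F n C2 := by
            refine ⟨hb1, fun hmem => ?_⟩
            obtain ⟨y, hy, hy0⟩ := hb2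
            exact hy0 (hmem y hy)
          have h1 : sInf (wH F n '' ((C1 : Set (Fin n → F)) \ dualE F n C2)) ≤ wH F n b :=
            Nat.sInf_le ⟨b, hbm, rfl⟩
          have h2 : wH F n b ≤ wQq F n a b := by
            simp only [wH, wQq]
            exact Set.ncard_le_ncard (fun i hi => Or.inr hi) (Set.toFinite _)
          have h3 : min (sInf (wH F n '' ((C2 : Set (Fin n → F)) \ dualE F n C1)))
              (sInf (wH F n '' ((C1 : Set (Fin n → F)) \ dualE F n C2)))
              ≤ sInf (wH F n '' ((C1 : Set (Fin n → F)) \ dualE F n C2)) := min_le_right _ _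
          have hwb0 : wH F n b = 0 := by omega
          have hb0 : b = 0 := by
            funext i
            by_contra hbi
            have hne : ({i : Fin n | b i ≠ 0}).Nonempty := ⟨i, hbi⟩
            have hpos := (Set.ncard_pos (Set.toFinite _)).mpr hne
            simp only [wH] at hwb0
            omega
          obtain ⟨y, hy, hy0⟩ := hb2
          exact hy0 (by rw [hb0, zero_dotProduct])
        have hid : ∀ z : (C2 ⧸ D.comap C2.subtype),
            (Xq F n a * Zq p F n b).mulVec (f z) = f z := by
          intro z
          rw [hmv]
          exact mulVec_id p F n D C2 a b _ hDC2 z.out.2 haD hb2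
        rw [mulVec_id_on_span _ f hid ψ hψ]
        exact horth
      · -- a ∉ C2 : shifted code orthogonal to code
        refine span_pairing_zero f (fun z => (Xq F n a * Zq p F n b).mulVec (f z)) ?_
          φ hφ _ (mulVec_mem_span _ f hψ)
        intro i j
        show star (f i) ⬝ᵥ ((Xq F n a * Zq p F n b).mulVec (f j)) = 0
        rw [hmv]
        exact pairing_caseB p F n D C2 a b _ _ hDC2 j.out.2 i.out.2 ha2
    · -- b ∉ C1 : nontrivial character
      have hbD : ∃ x ∈ D, Algebra.trace (ZMod p) F (b ⬝ᵥ x) ≠ 0 := by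
        have hC1 : (dotB F n).orthogonal D = C1 := dotB_orthogonal_orthogonal F n C1
        have hex : ∃ x ∈ D, b ⬝ᵥ x ≠ 0 := by
          by_contra hall
          push_neg at hall
          apply hb1
          rw [← hC1]
          intro x hx
          rw [dotB_apply, dotProduct_comm]
          exact hall x hx
        obtain ⟨x, hxD, hx0⟩ := hex
        haveI : FiniteDimensional (ZMod p) F := Module.Finite.of_finite
        have hnd := traceForm_nondegenerate (ZMod p) F
        have hex2 : ∃ s : F, Algebra.trace (ZMod p) F ((b ⬝ᵥ x) * s) ≠ 0 := by
          by_contra hall2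
          push_neg at hall2
          apply hx0
          apply hnd.1
          intro y
          rw [Algebra.traceForm_apply]
          exact hall2 y
        obtain ⟨s, hs⟩ := hex2
        refine ⟨s • x, D.smul_mem s hxD, ?_⟩
        rwa [dotProduct_smul, smul_eq_mul, mul_comm]
      refine span_pairing_zero f (fun z => (Xq F n a * Zq p F n b).mulVec (f z)) ?_
        φ hφ _ (mulVec_mem_span _ f hψ)
      intro i j
      show star (f i) ⬝ᵥ ((Xq F n a * Zq p F n b).mulVec (f j)) = 0
      rw [hmv]
      exact pairing_caseA p F n D a b _ _ hbD
end

section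
/- (Steane enlargement) Let C be an [n, k, d]_2 binary linear code with C^⊥ ⊆ C (Euclidean dual), and suppose C can be enlarged to a binary linear code C' ⊇ C of dimension k' > k + 1 and minimum distance d'. Then there exists an [[n, k + k' − n, D]] qubit code with D = min{ d, ⌈3d'/2⌉ }, i.e., a subspace Q of ℂ^{2^n} of dimension 2^{k+k'−n} satisfying the Knill–Laflamme condition for D. -/
open Matrix

open scoped BigOperators

/-- The Hamming weight of a binary vector. -/
def wHb (n : ℕ) (x : Fin n → ZMod 2) : ℕ :=
  (Finset.univ.filter fun i : Fin n => x i ≠ 0).card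

/-- The minimum Hamming weight of the nonzero codewords of a binary code. -/
noncomputable def dminb (n : ℕ) (C : Submodule (ZMod 2) (Fin n → ZMod 2)) : ℕ :=
  sInf (wHb n '' {x : Fin n → ZMod 2 | x ∈ C ∧ x ≠ 0})

/-- The Euclidean dual of a binary linear code. -/
def dualEb (n : ℕ) (C : Submodule (ZMod 2) (Fin n → ZMod 2)) :
    Set (Fin n → ZMod 2) :=
  {x | ∀ c ∈ C, x ⬝ᵥ c = 0}

namespace St11

/-- sign character of `ZMod 2`. -/
noncomputable def sgn (p : ZMod 2) : ℂ := (-1 : ℂ) ^ p.val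

lemma sgn_zero : sgn 0 = 1 := by simp [sgn]

lemma sgn_add (p q : ZMod 2) : sgn (p + q) = sgn p * sgn q := by
  have h : ∀ a : ZMod 2, a = 0 ∨ a = 1 := by decide
  have hv0 : (0 : ZMod 2).val = 0 := rfl
  have hv1 : (1 : ZMod 2).val = 1 := rfl
  have hv2 : ((1 : ZMod 2) + 1).val = 0 := rfl
  rcases h p with hp | hp <;> rcases h q with hq | hq <;>
    subst hp <;> subst hq <;>
    simp [sgn, hv0, hv1, hv2] <;> norm_num

lemma sgn_one : sgn 1 = -1 := by
  have hv1 : (1 : ZMod 2).val = 1 := rfl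
  simp [sgn, hv1]

lemma conj_sgn (p : ZMod 2) : (starRingEnd ℂ) (sgn p) = sgn p := by
  simp [sgn]

/-- character sum over a finite `ZMod 2`-module. -/
lemma charSum {M : Type*} [AddCommGroup M] [Fintype M]
    (ℓ : M →+ ZMod 2) :
    (∑ x : M, sgn (ℓ x)) = if ∀ x, ℓ x = 0 then (Fintype.card M : ℂ) else 0 := by
  split_ifs with h
  · simp [h, sgn_zero, Finset.card_univ]
  · push_neg at h
    obtain ⟨x₀, hx₀⟩ := h
    have hx1 : ℓ x₀ = 1 := by
      have : ∀ a : ZMod 2, a ≠ 0 → a = 1 := by decide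
      exact this _ hx₀
    have hre : (∑ x : M, sgn (ℓ x)) = ∑ x : M, sgn (ℓ (x₀ + x)) := by
      refine (Fintype.sum_equiv (Equiv.addLeft x₀) _ _ ?_).symm
      intro x; rfl
    have hneg : (∑ x : M, sgn (ℓ x)) = - ∑ x : M, sgn (ℓ x) := by
      nth_rewrite 1 [hre]
      rw [← Finset.sum_neg_distrib]
      refine Finset.sum_congr rfl fun x _ => ?_
      rw [map_add, hx1, sgn_add, sgn_one]; ring
    have h2 : (2 : ℂ) * ∑ x : M, sgn (ℓ x) = 0 := by linear_combination hneg
    have := mul_eq_zero.mp h2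
    simpa using this

lemma wHb_le_wQ_left (n : ℕ) (a b : Fin n → ZMod 2) : wHb n a ≤ wQ n a b := by
  apply Finset.card_le_card
  intro i hi
  simp only [Finset.mem_filter, Finset.mem_univ, true_and] at *
  exact Or.inl hi

lemma wHb_le_wQ_right (n : ℕ) (a b : Fin n → ZMod 2) : wHb n b ≤ wQ n a b := by
  apply Finset.card_le_card
  intro i hi
  simp only [Finset.mem_filter, Finset.mem_univ, true_and] at *
  exact Or.inr hi

lemma wHb_triple (n : ℕ) (a b : Fin n → ZMod 2) :
    wHb n a + wHb n b + wHb n (a + b) ≤ 2 * wQ n a b := by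
  have key : ∀ p q : ZMod 2,
      ((if p ≠ 0 then 1 else 0) + (if q ≠ 0 then 1 else 0) + (if p + q ≠ 0 then 1 else 0) : ℕ)
        ≤ 2 * (if p ≠ 0 ∨ q ≠ 0 then 1 else 0) := by decide
  simp only [wHb, wQ, Finset.card_filter]
  rw [← Finset.sum_add_distrib, ← Finset.sum_add_distrib, Finset.mul_sum]
  refine Finset.sum_le_sum fun i _ => ?_
  simpa [Pi.add_apply] using key (a i) (b i)

lemma dminb_le (n : ℕ) (C : Submodule (ZMod 2) (Fin n → ZMod 2)) (x : Fin n → ZMod 2)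
    (hx : x ∈ C) (hx0 : x ≠ 0) : dminb n C ≤ wHb n x :=
  Nat.sInf_le ⟨x, ⟨hx, hx0⟩, rfl⟩

lemma one_le_wHb (n : ℕ) (x : Fin n → ZMod 2) (hx0 : x ≠ 0) : 1 ≤ wHb n x := by
  rcases Function.ne_iff.mp hx0 with ⟨i, hi0⟩
  have hi : x i ≠ 0 := by simpa using hi0
  have hm : i ∈ Finset.univ.filter fun j : Fin n => x j ≠ 0 := by
    simp [hi]
  calc 1 ≤ (Finset.univ.filter fun j : Fin n => x j ≠ 0).card :=
        Finset.card_pos.mpr ⟨i, hm⟩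
    _ = wHb n x := rfl



section Core

variable {n : ℕ} (E : Submodule (ZMod 2) (Fin n → ZMod 2))
variable (W₀ D₀ : Submodule (ZMod 2) ↥E)

/-- coercion of a `W₀` element to the ambient space. -/
def wv (w : ↥W₀) : Fin n → ZMod 2 := ((w : ↥E) : Fin n → ZMod 2)

/-- coercion of a `D₀` element to the ambient space. -/
def dv (d : ↥D₀) : Fin n → ZMod 2 := ((d : ↥E) : Fin n → ZMod 2)

lemma wv_add (w w' : ↥W₀) : wv E W₀ (w + w') = wv E W₀ w + wv E W₀ w' := by
  simp [wv]

lemma wv_mem (w : ↥W₀) : wv E W₀ w ∈ E := (w : ↥E).2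

lemma dv_mem (d : ↥D₀) : dv E D₀ d ∈ E := (d : ↥E).2

section Sums
variable [Fintype ↥E] [Fintype ↥W₀] [Fintype ↥D₀] [DecidablePred (· ∈ E)]

lemma sum_dite_mem (G : ↥E → ℂ) :
    (∑ u : Fin n → ZMod 2, if hu : u ∈ E then G ⟨u, hu⟩ else 0) = ∑ e : ↥E, G e := by
  have h31 : (∑ u : Fin n → ZMod 2, if hu : u ∈ E then G ⟨u, hu⟩ else 0)
      = ∑ u ∈ Finset.univ.filter (· ∈ E), (if hu : u ∈ E then G ⟨u, hu⟩ else 0) :=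
    (Finset.sum_subset (Finset.subset_univ (Finset.univ.filter (· ∈ E)))
      (fun x _ hx => by rw [dif_neg]; simpa using hx)).symm
  have h32 : (∑ u ∈ Finset.univ.filter (· ∈ E), if hu : u ∈ E then G ⟨u, hu⟩ else 0)
      = ∑ e : ↥E, if hu : (e : Fin n → ZMod 2) ∈ E then G ⟨(e : Fin n → ZMod 2), hu⟩ else 0 :=
    Finset.sum_subtype _ (fun x => by simp) _
  rw [h31, h32]
  refine Finset.sum_congr rfl fun e _ => ?_
  rw [dif_pos e.2]

lemma sum_pair (hWD : IsCompl W₀ D₀) (G : ↥E → ℂ) :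
    (∑ e : ↥E, G e) = ∑ w : ↥W₀, ∑ dd : ↥D₀, G (↑w + ↑dd) := by
  have h41 : (∑ e : ↥E, G e) = ∑ p : ↥W₀ × ↥D₀, G (↑p.1 + ↑p.2) :=
    (Fintype.sum_equiv (W₀.prodEquivOfIsCompl D₀ hWD).toEquiv
      (fun p => G (↑p.1 + ↑p.2)) G (fun p => by
        show G (↑p.1 + ↑p.2) = G ((W₀.prodEquivOfIsCompl D₀ hWD) p)
        rw [Submodule.coe_prodEquivOfIsCompl' W₀ D₀ hWD p])).symm
  rw [h41]
  exact Fintype.sum_prod_type _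

end Sums

variable (hWD : IsCompl W₀ D₀) (f : ↥W₀ →ₗ[ZMod 2] ↥W₀)

/-- projection onto `W₀` along `D₀`. -/
noncomputable def prW : ↥E →ₗ[ZMod 2] ↥W₀ := W₀.linearProjOfIsCompl D₀ hWD

lemma prW_coe_left (w : ↥W₀) : prW E W₀ D₀ hWD ↑w = w :=
  Submodule.linearProjOfIsCompl_apply_left hWD w

lemma prW_coe_right (d : ↥D₀) : prW E W₀ D₀ hWD ↑d = 0 :=
  Submodule.linearProjOfIsCompl_apply_right hWD d

/-- the phase exponent of a basis coefficient. -/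
noncomputable def coefPhase (xv : Fin n → ZMod 2) (e : ↥E) : ZMod 2 :=
  wv E W₀ (prW E W₀ D₀ hWD e) ⬝ᵥ wv E W₀ (f (prW E W₀ D₀ hWD e))
    + wv E W₀ (f (prW E W₀ D₀ hWD e)) ⬝ᵥ xv

open Classical in
/-- the code state attached to the representative `xv`. -/
noncomputable def PSI (xv : Fin n → ZMod 2) (v : Fin n → ZMod 2) : ℂ :=
  if h : v + xv ∈ E then sgn (coefPhase E W₀ D₀ hWD f xv ⟨v + xv, h⟩) else 0

lemma psi_not_mem {xv v : Fin n → ZMod 2} (h : v + xv ∉ E) :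
    PSI E W₀ D₀ hWD f xv v = 0 := dif_neg h

lemma psi_mem (xv : Fin n → ZMod 2) (e : ↥E) :
    PSI E W₀ D₀ hWD f xv (xv + ↑e) = sgn (coefPhase E W₀ D₀ hWD f xv e) := by
  have hv : (xv + ↑e) + xv = (e : Fin n → ZMod 2) := by
    funext i
    exact (by decide : ∀ p q : ZMod 2, (p + q) + p = q) _ _
  have h1 : (xv + ↑e) + xv ∈ E := by rw [hv]; exact e.2
  rw [PSI, dif_pos h1]
  congr 1
  have he : (⟨(xv + ↑e) + xv, h1⟩ : ↥E) = e := Subtype.ext hv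
  rw [he]

lemma psi_conj (xv v : Fin n → ZMod 2) :
    (starRingEnd ℂ) (PSI E W₀ D₀ hWD f xv v) = PSI E W₀ D₀ hWD f xv v := by
  rw [PSI]
  split_ifs with h
  · exact conj_sgn _
  · simp

open Matrix in
/-- action of `Xop * Zop` on a vector. -/
lemma XZ_mulVec (a b : Fin n → ZMod 2) (u : (Fin n → ZMod 2) → ℂ)
    (v : Fin n → ZMod 2) :
    ((Xop n a * Zop n b).mulVec u) v = sgn (b ⬝ᵥ (v + a)) * u (v + a) := by
  classical
  have hM : ∀ j, (Xop n a * Zop n b) v j = if j = v + a then sgn (b ⬝ᵥ j) else 0 := by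
    intro j
    rw [Matrix.mul_apply]
    have hterm : ∀ y, Xop n a v y * Zop n b y j
        = if y = j then (if v = a + j then sgn (b ⬝ᵥ j) else 0) else 0 := by
      intro y
      simp only [Xop, Zop, Matrix.of_apply]
      by_cases hyj : y = j
      · subst hyj
        simp [sgn, ite_mul, zero_mul, one_mul]
      · simp [hyj]
    rw [Finset.sum_congr rfl fun y _ => hterm y, Finset.sum_ite_eq' Finset.univ j]
    simp only [Finset.mem_univ, if_true]
    by_cases hj : j = v + a
    · subst hj
      have : v = a + (v + a) := by
        funext i
        exact (by decide : ∀ p q : ZMod 2, p = q + (p + q)) _ _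
      rw [if_pos this, if_pos rfl]
    · rw [if_neg hj, if_neg]
      intro hv
      apply hj
      subst hv
      funext i
      exact (by decide : ∀ p q : ZMod 2, q = (p + q) + p) _ _
  show (fun j => (Xop n a * Zop n b) v j) ⬝ᵥ u = _
  rw [dotProduct]
  rw [Finset.sum_congr rfl fun j _ => by rw [hM j]]
  rw [Finset.sum_congr rfl fun j _ => (ite_mul _ _ _ (u j)).trans rfl]
  simp only [zero_mul]
  rw [Finset.sum_ite_eq' Finset.univ (v + a) (fun j => sgn (b ⬝ᵥ j) * u j)]
  simp

variable [Fintype ↥E] [Fintype ↥W₀] [Fintype ↥D₀] [DecidablePred (· ∈ E)]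

open Matrix in
/-- vanishing of the matrix element when the supports don't match. -/
lemma S_zero (a b xv xv' : Fin n → ZMod 2) (hne : a + xv + xv' ∉ E) :
    ∑ v : Fin n → ZMod 2,
        PSI E W₀ D₀ hWD f xv' v * sgn (b ⬝ᵥ (v + a)) * PSI E W₀ D₀ hWD f xv (v + a) = 0 := by
  refine Finset.sum_eq_zero fun v _ => ?_
  by_cases h1 : v + xv' ∈ E
  · by_cases h2 : (v + a) + xv ∈ E
    · exfalso
      apply hne
      have hsum : a + xv + xv' = (v + xv') + ((v + a) + xv) := by
        funext i
        exact (by decide : ∀ p q r s : ZMod 2,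
          (p + q) + r = (s + r) + ((s + p) + q)) (a i) (xv i) (xv' i) (v i)
      rw [hsum]
      exact E.add_mem h1 h2
    · rw [psi_not_mem E W₀ D₀ hWD f h2]; ring
  · rw [psi_not_mem E W₀ D₀ hWD f h1]; ring

open Matrix in
set_option maxHeartbeats 1000000 in
/-- the main matrix-element formula. -/
lemma S_formula (a b xv xv' : Fin n → ZMod 2) (ha : a + xv + xv' ∈ E) :
    ∑ v : Fin n → ZMod 2,
        PSI E W₀ D₀ hWD f xv' v * sgn (b ⬝ᵥ (v + a)) * PSI E W₀ D₀ hWD f xv (v + a)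
      = sgn (wv E W₀ (f (prW E W₀ D₀ hWD ⟨a + xv + xv', ha⟩)) ⬝ᵥ xv
            + b ⬝ᵥ xv' + b ⬝ᵥ a
            + wv E W₀ (prW E W₀ D₀ hWD ⟨a + xv + xv', ha⟩) ⬝ᵥ
                wv E W₀ (f (prW E W₀ D₀ hWD ⟨a + xv + xv', ha⟩)))
        * (∑ dd : ↥D₀, sgn (b ⬝ᵥ dv E D₀ dd))
        * (∑ w : ↥W₀, sgn (wv E W₀ (f w) ⬝ᵥ
                (xv + xv' + wv E W₀ (prW E W₀ D₀ hWD ⟨a + xv + xv', ha⟩))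
              + wv E W₀ w ⬝ᵥ wv E W₀ (f (prW E W₀ D₀ hWD ⟨a + xv + xv', ha⟩))
              + b ⬝ᵥ wv E W₀ w)) := by
  set h0 : ↥E := ⟨a + xv + xv', ha⟩ with hh0
  set sh : ↥W₀ := prW E W₀ D₀ hWD h0 with hsh
  set G : ↥E → ℂ := fun e =>
    sgn (coefPhase E W₀ D₀ hWD f xv' e) * sgn (b ⬝ᵥ (xv' + ↑e + a))
      * sgn (coefPhase E W₀ D₀ hWD f xv (e + h0)) with hG
  have step1 : (∑ v : Fin n → ZMod 2,
      PSI E W₀ D₀ hWD f xv' v * sgn (b ⬝ᵥ (v + a)) * PSI E W₀ D₀ hWD f xv (v + a))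
      = ∑ u : Fin n → ZMod 2,
        PSI E W₀ D₀ hWD f xv' (xv' + u) * sgn (b ⬝ᵥ ((xv' + u) + a))
          * PSI E W₀ D₀ hWD f xv ((xv' + u) + a) :=
    (Fintype.sum_equiv (Equiv.addLeft xv') _ _ (fun u => rfl)).symm
  rw [step1]
  have step2 : ∀ u : Fin n → ZMod 2,
      PSI E W₀ D₀ hWD f xv' (xv' + u) * sgn (b ⬝ᵥ ((xv' + u) + a))
          * PSI E W₀ D₀ hWD f xv ((xv' + u) + a)
        = if hu : u ∈ E then G ⟨u, hu⟩ else 0 := by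
    intro u
    by_cases hu : u ∈ E
    · rw [dif_pos hu]
      have e1 : PSI E W₀ D₀ hWD f xv' (xv' + u)
          = sgn (coefPhase E W₀ D₀ hWD f xv' ⟨u, hu⟩) := psi_mem E W₀ D₀ hWD f xv' ⟨u, hu⟩
      have harg : (xv' + u) + a = xv + ↑((⟨u, hu⟩ : ↥E) + h0) := by
        rw [Submodule.coe_add]
        show (xv' + u) + a = xv + (u + ((a + xv) + xv'))
        funext i
        exact (by decide : ∀ p q r s : ZMod 2,
          (s + q) + r = p + (q + ((r + p) + s))) (xv i) (u i) (a i) (xv' i)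
      have e3 : PSI E W₀ D₀ hWD f xv ((xv' + u) + a)
          = sgn (coefPhase E W₀ D₀ hWD f xv ((⟨u, hu⟩ : ↥E) + h0)) := by
        rw [harg]
        exact psi_mem E W₀ D₀ hWD f xv _
      rw [e1, e3, hG]
    · rw [dif_neg hu]
      have hnm : (xv' + u) + xv' ∉ E := by
        have : (xv' + u) + xv' = u := by
          funext i
          exact (by decide : ∀ p q : ZMod 2, (p + q) + p = q) _ _
        rwa [this]
      rw [psi_not_mem E W₀ D₀ hWD f hnm]
      ring
  rw [Finset.sum_congr rfl fun u _ => step2 u]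
  rw [sum_dite_mem E G]
  rw [sum_pair E W₀ D₀ hWD G]
  rw [Finset.mul_sum]
  refine Finset.sum_congr rfl fun w _ => ?_
  rw [Finset.mul_sum]
  rw [Finset.sum_mul]
  refine Finset.sum_congr rfl fun dd _ => ?_
  -- per-pair evaluation
  have hprW1 : prW E W₀ D₀ hWD (↑w + ↑dd) = w := by
    rw [map_add, prW_coe_left E W₀ D₀ hWD, prW_coe_right E W₀ D₀ hWD, add_zero]
  have hprW2 : prW E W₀ D₀ hWD ((↑w + ↑dd) + h0) = w + sh := by
    rw [map_add, hprW1, hsh]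
  have hcoe : ((↑w + ↑dd : ↥E) : Fin n → ZMod 2) = wv E W₀ w + dv E D₀ dd := by
    simp [wv, dv]
  rw [hG]
  simp only [coefPhase, hprW1, hprW2, hcoe]
  rw [map_add f w sh]
  rw [wv_add E W₀ w sh, wv_add E W₀ (f w) (f sh)]
  rw [← sgn_add, ← sgn_add, ← sgn_add, ← sgn_add]
  congr 1
  have htwo : (2 : ZMod 2) = 0 := by decide
  have hcomm : wv E W₀ sh ⬝ᵥ wv E W₀ (f w) = wv E W₀ (f w) ⬝ᵥ wv E W₀ sh :=
    dotProduct_comm _ _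
  simp only [dotProduct_add, add_dotProduct]
  linear_combination (wv E W₀ w ⬝ᵥ wv E W₀ (f w)) * htwo + hcomm

end Core



open Matrix

lemma z2_two : (2 : ZMod 2) = 0 := by decide

lemma z2_c1 : ∀ p : ZMod 2, (0 + p) + p = 0 := by decide

lemma z2_c2 : ∀ p : ZMod 2, (p + p) + 0 = 0 := by decide

lemma z2_c1' : ∀ p q : ZMod 2, (p + q) + p = q := by decide

lemma z2_c3 : ∀ p q r s : ZMod 2, (p + q) + ((p + r) + s) = (q + r) + s := by decide

lemma z2_c4 : ∀ p q r : ZMod 2, (p + q) + (q + r) = p + r := by decide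

lemma z2_c5 : ∀ p q : ZMod 2, p = q + (p + q) := by decide

lemma z2_c6 : ∀ p q r : ZMod 2, q + r = p + ((p + q) + r) := by decide

lemma z2_c6' : ∀ p q r : ZMod 2, (p + (p + q)) + r = q + r := by decide

lemma z2_c7 : ∀ p q : ZMod 2, q = (p + q) + p := by decide

/-- dot product against a sum of vectors. -/
lemma dotProduct_sumv {ι κ : Type*} [Fintype ι] (u : ι → ℂ) (s : Finset κ) (w : κ → ι → ℂ) :
    u ⬝ᵥ (∑ j ∈ s, w j) = ∑ j ∈ s, u ⬝ᵥ w j := by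
  simp only [dotProduct, Finset.sum_apply, Finset.mul_sum]
  rw [Finset.sum_comm]


end St11

set_option maxHeartbeats 4000000 in
set_option synthInstance.maxHeartbeats 1000000 in
/-- Steane enlargement: if `C` is an `[n, k, d]_2` code with
`C^⊥ ⊆ C` which can be enlarged to an `[n, k', d']_2` code `C' ⊇ C` with
`k' > k + 1`, then there is an `[[n, k + k' − n, D]]` qubit code with
`D = min{d, ⌈3d'/2⌉}`: a subspace `Q ⊆ ℂ^{2^n}` with `dim_ℂ Q = 2^{k+k'−n}`
satisfying the Knill–Laflamme condition for `D`. -/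
theorem statement11 (n k k' d d' : ℕ)
    (C C' : Submodule (ZMod 2) (Fin n → ZMod 2))
    (hk : Module.finrank (ZMod 2) C = k) (hd : d = dminb n C)
    (hdual : dualEb n C ⊆ (C : Set (Fin n → ZMod 2)))
    (hsub : C ≤ C')
    (hk' : Module.finrank (ZMod 2) C' = k') (hd' : d' = dminb n C')
    (hkk : k + 1 < k') :
    ∃ Q : Submodule ℂ ((Fin n → ZMod 2) → ℂ),
      Module.finrank ℂ Q = 2 ^ (k + k' - n) ∧
      ∀ a b : Fin n → ZMod 2, wQ n a b ≤ min d ((3 * d' + 1) / 2) - 1 →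
        ∀ φ ∈ Q, ∀ ψ ∈ Q, star φ ⬝ᵥ ψ = 0 →
          star φ ⬝ᵥ (Xop n a * Zop n b).mulVec ψ = 0 := by
  classical
  -- the dot-product bilinear form
  set Bf : LinearMap.BilinForm (ZMod 2) (Fin n → ZMod 2) :=
    LinearMap.mk₂ (ZMod 2) (fun x y => x ⬝ᵥ y) add_dotProduct smul_dotProduct
      dotProduct_add dotProduct_smul with hBf
  have hBapp : ∀ x y, Bf x y = x ⬝ᵥ y := fun x y => rfl
  have hrefl : Bf.IsRefl := by
    intro x y h
    rw [hBapp] at h ⊢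
    rwa [dotProduct_comm]
  have hnd : Bf.Nondegenerate := by
    refine LinearMap.BilinForm.Nondegenerate.ofSeparatingLeft ?_
    intro x hx
    funext i
    have h0 := hx (Pi.single i 1)
    rw [hBapp, dotProduct_single] at h0
    simpa using h0
  set E := Bf.orthogonal C with hE
  set D := Bf.orthogonal C' with hD
  have hmemE : ∀ v, v ∈ E ↔ ∀ c ∈ C, c ⬝ᵥ v = 0 := fun v => Iff.rfl
  have hmemD : ∀ v, v ∈ D ↔ ∀ c ∈ C', c ⬝ᵥ v = 0 := fun v => Iff.rfl
  have hOE : Bf.orthogonal E = C := by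
    rw [hE]
    exact LinearMap.BilinForm.orthogonal_orthogonal hnd hrefl C
  have hOD : Bf.orthogonal D = C' := by
    rw [hD]
    exact LinearMap.BilinForm.orthogonal_orthogonal hnd hrefl C'
  have frE : Module.finrank (ZMod 2) ↥E = Module.finrank (ZMod 2) (Fin n → ZMod 2)
      - Module.finrank (ZMod 2) ↥C := by
    rw [hE, LinearMap.BilinForm.finrank_orthogonal hnd]
  have frD : Module.finrank (ZMod 2) ↥D = Module.finrank (ZMod 2) (Fin n → ZMod 2)
      - Module.finrank (ZMod 2) ↥C' := by
    rw [hD, LinearMap.BilinForm.finrank_orthogonal hnd]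
  clear_value Bf
  clear_value E D
  have hEC : E ≤ C := by
    intro v hv
    have hvd : v ∈ dualEb n C := by
      intro c hc
      rw [dotProduct_comm]
      exact (hmemE v).1 hv c hc
    exact hdual hvd
  have hDE : D ≤ E := by
    rw [hE, hD]
    exact LinearMap.BilinForm.orthogonal_le hsub
  have hEC' : E ≤ C' := hEC.trans hsub
  have hDperp : ∀ v ∈ D, ∀ y ∈ C', v ⬝ᵥ y = 0 := by
    intro v hv y hy
    rw [dotProduct_comm]
    exact (hmemD v).1 hv y hy
  have hC'mem : ∀ v, (∀ u ∈ D, u ⬝ᵥ v = 0) → v ∈ C' := by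
    intro v hv
    rw [← hOD]
    intro u hu
    show Bf u v = 0
    rw [hBapp]
    exact hv u hu
  have hCmem : ∀ v, (∀ u ∈ E, u ⬝ᵥ v = 0) → v ∈ C := by
    intro v hv
    rw [← hOE]
    intro u hu
    show Bf u v = 0
    rw [hBapp]
    exact hv u hu
  -- finrank bookkeeping
  have frV : Module.finrank (ZMod 2) (Fin n → ZMod 2) = n := by
    rw [Module.finrank_pi]
    simp
  have hkn : k ≤ n := by
    have h1 := Submodule.finrank_le C
    omega
  have hk'n : k' ≤ n := by
    have h1 := Submodule.finrank_le C'
    omega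
  have hkk'le : k ≤ k' := by
    have h1 := Submodule.finrank_mono hsub
    omega
  have frE' : Module.finrank (ZMod 2) ↥E = n - k := by rw [frE, frV, hk]
  have frD' : Module.finrank (ZMod 2) ↥D = n - k' := by rw [frD, frV, hk']
  have hnkk : n - k ≤ k := by
    have h := Submodule.finrank_mono hEC
    omega
  have hnkk' : n - k ≤ k' := by
    have h := Submodule.finrank_mono hEC'
    omega
  -- complements
  obtain ⟨D₀, hD₀mem, frD₀⟩ : ∃ D₀ : Submodule (ZMod 2) ↥E,
      (∀ x : ↥E, x ∈ D₀ ↔ (x : Fin n → ZMod 2) ∈ D)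
        ∧ Module.finrank (ZMod 2) ↥D₀ = n - k' := by
    refine ⟨D.comap E.subtype, fun x => Iff.rfl, ?_⟩
    rw [← frD']
    exact (Submodule.comapSubtypeEquivOfLe hDE).finrank_eq
  obtain ⟨W₀, hWD'⟩ := Submodule.exists_isCompl D₀
  have hWD : IsCompl W₀ D₀ := hWD'.symm
  obtain ⟨E₀, hE₀mem, frE₀⟩ : ∃ E₀ : Submodule (ZMod 2) ↥C',
      (∀ x : ↥C', x ∈ E₀ ↔ (x : Fin n → ZMod 2) ∈ E)
        ∧ Module.finrank (ZMod 2) ↥E₀ = n - k := by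
    refine ⟨E.comap C'.subtype, fun x => Iff.rfl, ?_⟩
    rw [← frE']
    exact (Submodule.comapSubtypeEquivOfLe hEC').finrank_eq
  obtain ⟨R₀, hER⟩ := Submodule.exists_isCompl E₀
  have frW₀ : Module.finrank (ZMod 2) ↥W₀ = k' - k := by
    have hsum := Submodule.finrank_add_eq_of_isCompl hWD
    rw [frD₀, frE'] at hsum
    omega
  have frR₀ : Module.finrank (ZMod 2) ↥R₀ = k + k' - n := by
    have hsum := Submodule.finrank_add_eq_of_isCompl hER
    rw [frE₀, hk'] at hsum
    omega
  -- membership helpers for D₀ / W₀ elements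
  have hdvD : ∀ dd : ↥D₀, St11.dv E D₀ dd ∈ D := fun dd => (hD₀mem _).1 dd.2
  have hwvE : ∀ w : ↥W₀, St11.wv E W₀ w ∈ E := fun w => (w : ↥E).2
  -- the fixed-point-free endomorphism f of W₀
  haveI : Fact (Nat.Prime 2) := ⟨Nat.prime_two⟩
  obtain ⟨α, hα0, hα1⟩ : ∃ α : GaloisField 2 (k' - k), α ≠ 0 ∧ α ≠ 1 := by
    by_contra hcon
    push_neg at hcon
    haveI : Fintype (GaloisField 2 (k' - k)) := Fintype.ofFinite _
    have hcard : Fintype.card (GaloisField 2 (k' - k)) = 2 ^ (k' - k) := by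
      rw [← Nat.card_eq_fintype_card]
      exact GaloisField.card 2 (k' - k) (by omega)
    have hsubs : (Finset.univ : Finset (GaloisField 2 (k' - k))) ⊆ {0, 1} := by
      intro x _
      rcases eq_or_ne x 0 with h | h
      · simp [h]
      · simp [hcon x h]
    have hle := Finset.card_le_card hsubs
    have h2 : ({0, 1} : Finset (GaloisField 2 (k' - k))).card ≤ 2 :=
      (Finset.card_insert_le _ _).trans (by simp)
    rw [Finset.card_univ, hcard] at hle
    have h4 : 4 ≤ 2 ^ (k' - k) := by
      calc (4 : ℕ) = 2 ^ 2 := rfl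
      _ ≤ 2 ^ (k' - k) := Nat.pow_le_pow_right (by norm_num) (by omega)
    omega
  obtain ⟨e₁⟩ : Nonempty (↥W₀ ≃ₗ[ZMod 2] GaloisField 2 (k' - k)) :=
    FiniteDimensional.nonempty_linearEquiv_of_finrank_eq
      (by rw [frW₀, GaloisField.finrank 2 (show k' - k ≠ 0 by omega)])
  set f : ↥W₀ →ₗ[ZMod 2] ↥W₀ :=
    e₁.symm.toLinearMap ∘ₗ (LinearMap.mulLeft (ZMod 2) α) ∘ₗ e₁.toLinearMap with hf
  have hfapp : ∀ w, f w = e₁.symm (α * e₁ w) := fun w => rfl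
  have hf_surj : Function.Surjective f := by
    intro w'
    refine ⟨e₁.symm (α⁻¹ * e₁ w'), ?_⟩
    rw [hfapp, LinearEquiv.apply_symm_apply, ← mul_assoc, mul_inv_cancel₀ hα0, one_mul,
      LinearEquiv.symm_apply_apply]
  have h1α : (1 : GaloisField 2 (k' - k)) + α ≠ 0 := by
    intro h
    apply hα1
    have hneg : α = -1 := eq_neg_of_add_eq_zero_right h
    rw [hneg, CharTwo.neg_eq]
  have hf1_eq : ∀ w, w + f w = e₁.symm ((1 + α) * e₁ w) := by
    intro w
    have h1 : e₁ (w + f w) = (1 + α) * e₁ w := by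
      rw [map_add, hfapp, LinearEquiv.apply_symm_apply, add_mul, one_mul]
    rw [← h1, LinearEquiv.symm_apply_apply]
  have hf1_surj : Function.Surjective (fun w : ↥W₀ => w + f w) := by
    intro w'
    refine ⟨e₁.symm ((1 + α)⁻¹ * e₁ w'), ?_⟩
    show e₁.symm ((1 + α)⁻¹ * e₁ w') + f (e₁.symm ((1 + α)⁻¹ * e₁ w')) = w'
    rw [hf1_eq, LinearEquiv.apply_symm_apply, ← mul_assoc, mul_inv_cancel₀ h1α, one_mul,
      LinearEquiv.symm_apply_apply]
  clear_value f
  -- Fintype instances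
  haveI : Fintype ↥E := Fintype.ofFinite _
  haveI : Fintype ↥W₀ := Fintype.ofFinite _
  haveI : Fintype ↥D₀ := Fintype.ofFinite _
  haveI : Fintype ↥R₀ := Fintype.ofFinite _
  -- representatives
  set rv : ↥R₀ → (Fin n → ZMod 2) := fun x => ((x : ↥C') : Fin n → ZMod 2) with hrv
  have rv_add : ∀ x y, rv (x + y) = rv x + rv y := by
    intro x y
    simp [hrv]
  have rv_memC' : ∀ x, rv x ∈ C' := fun x => (x : ↥C').2
  have rv_inj0 : ∀ x : ↥R₀, rv x ∈ E → x = 0 := by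
    intro x hx
    have hxE₀ : (x : ↥C') ∈ E₀ := (hE₀mem _).2 hx
    have hbot : (x : ↥C') ∈ E₀ ⊓ R₀ := ⟨hxE₀, x.2⟩
    rw [hER.inf_eq_bot] at hbot
    exact Subtype.ext hbot
  have hz2R : ∀ y : ↥R₀, y + y = 0 := by
    intro y
    rw [← two_smul (ZMod 2) y, St11.z2_two, zero_smul]
  have rv_diag : ∀ x x' : ↥R₀, rv x + rv x' ∈ E → x' = x := by
    intro x x' hxx
    have : rv (x + x') ∈ E := by rwa [rv_add]
    have h0 := rv_inj0 _ this
    have : x' = x + (x + x') := by rw [← add_assoc, hz2R, zero_add]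
    rw [this, h0, add_zero]
  -- the code states and code space
  set Ψ : ↥R₀ → (Fin n → ZMod 2) → ℂ := fun x => St11.PSI E W₀ D₀ hWD f (rv x) with hΨ
  set Q := Submodule.span ℂ (Set.range Ψ) with hQ
  have hstar : ∀ x : ↥R₀, star (Ψ x) = Ψ x := by
    intro x
    funext v
    rw [Pi.star_apply, ← starRingEnd_apply]
    exact St11.psi_conj E W₀ D₀ hWD f (rv x) v
  have cardD0 : (0 : ℕ) < Fintype.card ↥D₀ := Fintype.card_pos
  have cardW0 : (0 : ℕ) < Fintype.card ↥W₀ := Fintype.card_pos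
  -- Gram matrix of the states
  have hGram : ∀ x x' : ↥R₀, (star (Ψ x') ⬝ᵥ Ψ x)
      = if x' = x then ((Fintype.card ↥D₀ : ℂ) * (Fintype.card ↥W₀ : ℂ)) else 0 := by
    intro x x'
    have hrw : star (Ψ x') ⬝ᵥ Ψ x
        = ∑ v, Ψ x' v * St11.sgn ((0 : Fin n → ZMod 2) ⬝ᵥ (v + 0)) * Ψ x (v + 0) := by
      rw [hstar]
      show (∑ v, Ψ x' v * Ψ x v) = _
      refine Finset.sum_congr rfl fun v _ => ?_
      rw [add_zero, zero_dotProduct, St11.sgn_zero]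
      ring
    rw [hrw]
    by_cases hxx : x' = x
    · subst hxx
      have hzero : (0 : Fin n → ZMod 2) + rv x' + rv x' = 0 := by
        funext i
        exact St11.z2_c1 _
      have ha : (0 : Fin n → ZMod 2) + rv x' + rv x' ∈ E := by
        rw [hzero]; exact E.zero_mem
      rw [St11.S_formula E W₀ D₀ hWD f 0 0 (rv x') (rv x') ha]
      have he0 : (⟨(0 : Fin n → ZMod 2) + rv x' + rv x', ha⟩ : ↥E) = 0 := Subtype.ext hzero
      rw [he0]
      have hwv0 : St11.wv E W₀ (0 : ↥W₀) = 0 := by simp [St11.wv]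
      have hrr : rv x' + rv x' + (0 : Fin n → ZMod 2) = 0 := by
        funext i
        exact St11.z2_c2 _
      rw [if_pos rfl]
      simp only [map_zero, hwv0, hrr, zero_dotProduct, dotProduct_zero,
        add_zero, zero_add, St11.sgn_zero, Finset.sum_const, Finset.card_univ, nsmul_eq_mul,
        mul_one, one_mul]
    · have hne : (0 : Fin n → ZMod 2) + rv x + rv x' ∉ E := by
        intro hmem
        apply hxx
        refine rv_diag x x' ?_
        have : (0 : Fin n → ZMod 2) + rv x + rv x' = rv x + rv x' := by
          rw [zero_add]
        rwa [this] at hmem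
      rw [St11.S_zero E W₀ D₀ hWD f 0 0 (rv x) (rv x') hne, if_neg hxx]
  -- linear independence and dimension
  have hlinind : LinearIndependent ℂ Ψ := by
    rw [Fintype.linearIndependent_iff]
    intro g hg x'
    have h1 : star (Ψ x') ⬝ᵥ (∑ x : ↥R₀, g x • Ψ x)
        = g x' * ((Fintype.card ↥D₀ : ℂ) * (Fintype.card ↥W₀ : ℂ)) := by
      rw [St11.dotProduct_sumv]
      have : ∀ x : ↥R₀, star (Ψ x') ⬝ᵥ (g x • Ψ x)
          = if x' = x then g x * ((Fintype.card ↥D₀ : ℂ) * (Fintype.card ↥W₀ : ℂ)) else 0 := by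
        intro x
        rw [dotProduct_smul, hGram x x', smul_eq_mul]
        split_ifs <;> ring
      rw [Finset.sum_congr rfl fun x _ => this x, Finset.sum_ite_eq]
      simp
    rw [hg, dotProduct_zero] at h1
    have hNne : ((Fintype.card ↥D₀ : ℂ) * (Fintype.card ↥W₀ : ℂ)) ≠ 0 :=
      mul_ne_zero (Nat.cast_ne_zero.mpr cardD0.ne') (Nat.cast_ne_zero.mpr cardW0.ne')
    exact (mul_eq_zero.mp h1.symm).resolve_right hNne
  refine ⟨Q, ?_, ?_⟩
  · -- dimension
    rw [hQ, finrank_span_eq_card hlinind]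
    have hcard := Module.card_eq_pow_finrank (K := ZMod 2) (V := ↥R₀)
    rw [ZMod.card, frR₀] at hcard
    rw [hcard]
  · -- Knill–Laflamme condition
    intro a b hw φ hφ ψp hψp horth
    -- positivity of the distances
    have hCne : C ≠ ⊥ := by
      intro hbot
      have hEtop : ∀ v, v ∈ E := by
        intro v
        refine (hmemE v).2 fun c hc => ?_
        rw [hbot, Submodule.mem_bot] at hc
        rw [hc]
        exact zero_dotProduct v
      have hv0 : ∀ v : Fin n → ZMod 2, v = 0 := by
        intro v
        have hvC := hEC (hEtop v)
        rw [hbot, Submodule.mem_bot] at hvC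
        exact hvC
      have hC'bot : C' = ⊥ := by
        rw [eq_bot_iff]
        intro x _
        rw [Submodule.mem_bot]
        exact hv0 x
      rw [hC'bot, finrank_bot] at hk'
      omega
    have hd1 : 1 ≤ d := by
      rw [hd]
      obtain ⟨y, hyC, hy0⟩ := (Submodule.ne_bot_iff C).mp hCne
      have hmem : dminb n C ∈ wHb n '' {x | x ∈ C ∧ x ≠ 0} :=
        Nat.sInf_mem ⟨wHb n y, ⟨y, ⟨hyC, hy0⟩, rfl⟩⟩
      obtain ⟨z, ⟨_, hz0⟩, hzw⟩ := hmem
      rw [← hzw]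
      exact St11.one_le_wHb n z hz0
    have hC'ne : C' ≠ ⊥ := by
      intro hbot
      exact hCne (le_bot_iff.mp (hbot ▸ hsub))
    have hd'1 : 1 ≤ d' := by
      rw [hd']
      obtain ⟨y, hyC, hy0⟩ := (Submodule.ne_bot_iff C').mp hC'ne
      have hmem : dminb n C' ∈ wHb n '' {x | x ∈ C' ∧ x ≠ 0} :=
        Nat.sInf_mem ⟨wHb n y, ⟨y, ⟨hyC, hy0⟩, rfl⟩⟩
      obtain ⟨z, ⟨_, hz0⟩, hzw⟩ := hmem
      rw [← hzw]
      exact St11.one_le_wHb n z hz0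
    have hwd : wQ n a b < d := by omega
    have hw32 : 2 * wQ n a b + 1 ≤ 3 * d' := by omega
    -- decomposition of elements of E
    have hEdecomp : ∀ u (hu : u ∈ E), ∃ (w1 : ↥W₀) (dd1 : ↥D₀),
        u = St11.wv E W₀ w1 + St11.dv E D₀ dd1
          ∧ St11.prW E W₀ D₀ hWD ⟨u, hu⟩ = w1 := by
      intro u hu
      obtain ⟨⟨w1, dd1⟩, hwd1⟩ := (W₀.prodEquivOfIsCompl D₀ hWD).surjective ⟨u, hu⟩
      have h1 : ((w1 : ↥E) + (dd1 : ↥E)) = (⟨u, hu⟩ : ↥E) := by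
        rw [← Submodule.coe_prodEquivOfIsCompl' W₀ D₀ hWD (w1, dd1)]
        exact hwd1
      refine ⟨w1, dd1, ?_, ?_⟩
      · have h2 := congrArg (fun z : ↥E => (z : Fin n → ZMod 2)) h1
        simpa [St11.wv, St11.dv] using h2.symm
      · rw [← h1, map_add, St11.prW_coe_left E W₀ D₀ hWD, St11.prW_coe_right E W₀ D₀ hWD,
          add_zero]
    -- the scalar lambda
    have hlam : ∃ lam : ℂ, ∀ x x' : ↥R₀,
        (∑ v, Ψ x' v * St11.sgn (b ⬝ᵥ (v + a)) * Ψ x (v + a))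
          = lam * (star (Ψ x') ⬝ᵥ Ψ x) := by
      by_cases hcase : ∃ ρ : ↥R₀, a + rv ρ ∈ E
      · obtain ⟨ρ, hρ⟩ := hcase
        obtain ⟨sh, hsh⟩ : ∃ sh, sh = St11.prW E W₀ D₀ hWD ⟨a + rv ρ, hρ⟩ := ⟨_, rfl⟩
        -- pairing characterization
        have hpair : ∀ x x' : ↥R₀, (a + rv x + rv x' ∈ E) ↔ x' = x + ρ := by
          intro x x'
          constructor
          · intro hmem
            have hsum : rv (ρ + x + x') ∈ E := by
              have hadd := E.add_mem hρ hmem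
              have heq : (a + rv ρ) + (a + rv x + rv x') = rv (ρ + x + x') := by
                rw [rv_add, rv_add]
                funext i
                exact St11.z2_c3 (a i) (rv ρ i) (rv x i) (rv x' i)
              rwa [heq] at hadd
            have h0' := rv_inj0 _ hsum
            have h2 : (ρ + x) + (ρ + x + x') = x' := by
              rw [← add_assoc, hz2R, zero_add]
            rw [h0', add_zero] at h2
            rw [← h2, add_comm]
          · rintro rfl
            have heq : a + rv x + rv (x + ρ) = a + rv ρ := by
              rw [rv_add]
              funext i
              exact St11.z2_c4 (a i) (rv x i) (rv ρ i)
            rw [heq]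
            exact hρ
        by_cases hbC'' : b ∈ C'
        · -- b ∈ C' : the W functional decides everything
          obtain ⟨ℓW, hℓWapp⟩ : ∃ ℓ : ↥W₀ →+ ZMod 2, ∀ w, ℓ w
              = St11.wv E W₀ (f w) ⬝ᵥ (rv ρ + St11.wv E W₀ sh)
                + St11.wv E W₀ w ⬝ᵥ St11.wv E W₀ (f sh) + b ⬝ᵥ St11.wv E W₀ w := by
            refine ⟨AddMonoidHom.mk' (fun w => St11.wv E W₀ (f w) ⬝ᵥ (rv ρ + St11.wv E W₀ sh)
              + St11.wv E W₀ w ⬝ᵥ St11.wv E W₀ (f sh) + b ⬝ᵥ St11.wv E W₀ w) ?_, fun w => rfl⟩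
            intro w w'
            show St11.wv E W₀ (f (w + w')) ⬝ᵥ (rv ρ + St11.wv E W₀ sh)
                + St11.wv E W₀ (w + w') ⬝ᵥ St11.wv E W₀ (f sh)
                + b ⬝ᵥ St11.wv E W₀ (w + w')
              = (St11.wv E W₀ (f w) ⬝ᵥ (rv ρ + St11.wv E W₀ sh)
                + St11.wv E W₀ w ⬝ᵥ St11.wv E W₀ (f sh) + b ⬝ᵥ St11.wv E W₀ w)
                + (St11.wv E W₀ (f w') ⬝ᵥ (rv ρ + St11.wv E W₀ sh)
                + St11.wv E W₀ w' ⬝ᵥ St11.wv E W₀ (f sh) + b ⬝ᵥ St11.wv E W₀ w')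
            rw [map_add f, St11.wv_add, St11.wv_add]
            simp only [add_dotProduct, dotProduct_add]
            ring
          have hDfull : (∑ dd : ↥D₀, St11.sgn (b ⬝ᵥ St11.dv E D₀ dd))
              = (Fintype.card ↥D₀ : ℂ) := by
            have hall : ∀ dd : ↥D₀, b ⬝ᵥ St11.dv E D₀ dd = 0 := by
              intro dd
              rw [dotProduct_comm]
              exact hDperp _ (hdvD dd) b hbC''
            simp [hall, St11.sgn_zero, Finset.card_univ]
          by_cases hLW : ∀ w : ↥W₀, (ℓW w : ZMod 2) = 0
          · -- scalar action: the distance argument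
            have haC' : a ∈ C' := by
              have heq : a = rv ρ + (a + rv ρ) := by
                funext i
                exact St11.z2_c5 (a i) (rv ρ i)
              rw [heq]
              exact C'.add_mem (rv_memC' ρ) (hEC' hρ)
            -- the D-part of h0
            obtain ⟨w1, dd1, hco1, hpr1⟩ := hEdecomp (a + rv ρ) hρ
            have hKd : (a + rv ρ) + St11.wv E W₀ sh = St11.dv E D₀ dd1 := by
              rw [hsh, hpr1, hco1]
              funext i
              exact St11.z2_c1' (St11.wv E W₀ w1 i) (St11.dv E D₀ dd1 i)
            have hKdD : (a + rv ρ) + St11.wv E W₀ sh ∈ D := by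
              rw [hKd]
              exact hdvD dd1
            -- the functional in terms of a
            have hLWa : ∀ w : ↥W₀, St11.wv E W₀ (f w) ⬝ᵥ a
                + St11.wv E W₀ w ⬝ᵥ St11.wv E W₀ (f sh) + b ⬝ᵥ St11.wv E W₀ w = 0 := by
              intro w
              have h1 := hLW w
              rw [hℓWapp] at h1
              have hsplit : rv ρ + St11.wv E W₀ sh = a + ((a + rv ρ) + St11.wv E W₀ sh) := by
                funext i
                exact St11.z2_c6 (a i) (rv ρ i) (St11.wv E W₀ sh i)
              rw [hsplit, dotProduct_add] at h1
              have hz : St11.wv E W₀ (f w) ⬝ᵥ ((a + rv ρ) + St11.wv E W₀ sh) = 0 := by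
                rw [dotProduct_comm]
                exact hDperp _ hKdD _ (hEC' (hwvE (f w)))
              rw [hz, add_zero] at h1
              exact h1
            have haC : a ∈ C := by
              by_contra haC
              have hbC : b ∉ C := by
                intro hbC
                have hfa : ∀ w : ↥W₀, St11.wv E W₀ (f w) ⬝ᵥ a = 0 := by
                  intro w
                  have h1 := hLWa w
                  have h2 : St11.wv E W₀ w ⬝ᵥ St11.wv E W₀ (f sh) = 0 := by
                    rw [dotProduct_comm]
                    exact (hmemE _).1 (hwvE w) _ (hEC (hwvE (f sh)))
                  have h3 : b ⬝ᵥ St11.wv E W₀ w = 0 := (hmemE _).1 (hwvE w) b hbC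
                  rwa [h2, h3, add_zero, add_zero] at h1
                apply haC
                apply hCmem
                intro u hu
                obtain ⟨w1', dd1', hco', _⟩ := hEdecomp u hu
                obtain ⟨w2, hw2⟩ := hf_surj w1'
                rw [hco', add_dotProduct, ← hw2, hfa w2,
                  hDperp _ (hdvD dd1') a haC', add_zero]
              have habC : a + b ∉ C := by
                intro habC
                have hfa : ∀ w : ↥W₀, (St11.wv E W₀ w + St11.wv E W₀ (f w)) ⬝ᵥ a = 0 := by
                  intro w
                  have h1 := hLWa w
                  have h2 : St11.wv E W₀ w ⬝ᵥ St11.wv E W₀ (f sh) = 0 := by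
                    rw [dotProduct_comm]
                    exact (hmemE _).1 (hwvE w) _ (hEC (hwvE (f sh)))
                  have h3 : b ⬝ᵥ St11.wv E W₀ w = a ⬝ᵥ St11.wv E W₀ w := by
                    have hba : b = (a + b) + a := by
                      funext i
                      exact St11.z2_c7 (a i) (b i)
                    rw [hba, add_dotProduct, (hmemE _).1 (hwvE w) _ habC, zero_add]
                  rw [h2, add_zero, h3, dotProduct_comm a] at h1
                  rw [add_dotProduct]
                  rw [add_comm] at h1
                  exact h1
                apply haC
                apply hCmem
                intro u hu
                obtain ⟨w1', dd1', hco', _⟩ := hEdecomp u hu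
                obtain ⟨w2, hw2⟩ := hf1_surj w1'
                have hw2' : St11.wv E W₀ w1' = St11.wv E W₀ w2 + St11.wv E W₀ (f w2) := by
                  rw [← St11.wv_add]
                  exact congrArg _ hw2.symm
                rw [hco', add_dotProduct, hw2', hfa w2,
                  hDperp _ (hdvD dd1') a haC', add_zero]
              have ha0 : a ≠ 0 := fun h => haC (h ▸ C.zero_mem)
              have hb0 : b ≠ 0 := fun h => hbC (h ▸ C.zero_mem)
              have hab0 : a + b ≠ 0 := fun h => habC (h ▸ C.zero_mem)
              have habC' : a + b ∈ C' := C'.add_mem haC' hbC''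
              have h1 := St11.dminb_le n C' a haC' ha0
              have h2 := St11.dminb_le n C' b hbC'' hb0
              have h3 := St11.dminb_le n C' (a + b) habC' hab0
              have h4 := St11.wHb_triple n a b
              rw [← hd'] at h1 h2 h3
              omega
            have ha0 : a = 0 := by
              by_contra ha0
              have h1 := St11.dminb_le n C a haC ha0
              have h2 := St11.wHb_le_wQ_left n a b
              rw [← hd] at h1
              omega
            have hρ0 : ρ = 0 := by
              apply rv_inj0
              have hρ' := hρ
              rw [ha0, zero_add] at hρ'
              exact hρ'
            have hrv0 : rv (0 : ↥R₀) = 0 := by simp [hrv]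
            have hwv0 : St11.wv E W₀ (0 : ↥W₀) = 0 := by simp [St11.wv]
            have hsh0 : sh = 0 := by
              have hval : (⟨a + rv ρ, hρ⟩ : ↥E) = 0 := by
                refine Subtype.ext ?_
                show a + rv ρ = 0
                rw [ha0, hρ0, hrv0, add_zero]
              rw [hsh, hval, map_zero]
            have hbW0 : ∀ w : ↥W₀, b ⬝ᵥ St11.wv E W₀ w = 0 := by
              intro w
              have h1 := hLW w
              rw [hℓWapp, hρ0, hsh0, hrv0, hwv0, add_zero, dotProduct_zero,
                map_zero, hwv0, dotProduct_zero, zero_add, zero_add] at h1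
              exact h1
            have hbR : ∀ x : ↥R₀, b ⬝ᵥ rv x = 0 := by
              by_contra hbR
              push_neg at hbR
              obtain ⟨x₁, hx₁⟩ := hbR
              have hbC : b ∈ C := by
                apply hCmem
                intro u hu
                obtain ⟨w1', dd1', hco', _⟩ := hEdecomp u hu
                have hw1 : St11.wv E W₀ w1' ⬝ᵥ b = 0 := by
                  rw [dotProduct_comm]
                  exact hbW0 w1'
                rw [hco', add_dotProduct, hw1,
                  hDperp _ (hdvD dd1') b hbC'', add_zero]
              have hb0 : b ≠ 0 := by
                intro h
                rw [h] at hx₁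
                exact hx₁ (zero_dotProduct _)
              have h1 := St11.dminb_le n C b hbC hb0
              have h2 := St11.wHb_le_wQ_right n a b
              rw [← hd] at h1
              omega
            -- lam = 1
            refine ⟨1, fun x x' => ?_⟩
            rw [one_mul, hGram x x']
            by_cases hxx : x' = x
            · subst hxx
              have hzero : a + rv x' + rv x' = 0 := by
                rw [ha0]
                funext i
                exact St11.z2_c1 (rv x' i)
              have hpr : a + rv x' + rv x' ∈ E := by
                rw [hzero]
                exact E.zero_mem
              rw [St11.S_formula E W₀ D₀ hWD f a b (rv x') (rv x') hpr]
              have hsub0 : (⟨a + rv x' + rv x', hpr⟩ : ↥E) = 0 := Subtype.ext hzero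
              rw [hsub0]
              have hrr : rv x' + rv x' + (0 : Fin n → ZMod 2) = 0 := by
                funext i
                exact St11.z2_c2 (rv x' i)
              rw [if_pos rfl]
              have hDgone := hDfull
              have hWone : ∀ w : ↥W₀,
                  St11.wv E W₀ (f w) ⬝ᵥ (rv x' + rv x'
                      + St11.wv E W₀ (St11.prW E W₀ D₀ hWD 0))
                    + St11.wv E W₀ w ⬝ᵥ St11.wv E W₀ (f (St11.prW E W₀ D₀ hWD 0))
                    + b ⬝ᵥ St11.wv E W₀ w = 0 := by
                intro w
                rw [map_zero, hwv0, map_zero, hwv0, hrr, dotProduct_zero,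
                  dotProduct_zero, hbW0 w, add_zero, add_zero]
              have hK0 : St11.wv E W₀ (f (St11.prW E W₀ D₀ hWD 0)) ⬝ᵥ rv x'
                  + b ⬝ᵥ rv x' + b ⬝ᵥ a
                  + St11.wv E W₀ (St11.prW E W₀ D₀ hWD 0) ⬝ᵥ
                      St11.wv E W₀ (f (St11.prW E W₀ D₀ hWD 0)) = 0 := by
                rw [map_zero, hwv0, map_zero, hwv0, zero_dotProduct,
                  zero_dotProduct, hbR x', ha0, dotProduct_zero]
                ring
              rw [hK0, St11.sgn_zero, hDgone]
              have hWsum : (∑ w : ↥W₀, St11.sgn (St11.wv E W₀ (f w) ⬝ᵥ (rv x' + rv x'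
                      + St11.wv E W₀ (St11.prW E W₀ D₀ hWD 0))
                    + St11.wv E W₀ w ⬝ᵥ St11.wv E W₀ (f (St11.prW E W₀ D₀ hWD 0))
                    + b ⬝ᵥ St11.wv E W₀ w)) = (Fintype.card ↥W₀ : ℂ) := by
                rw [Finset.sum_congr rfl fun w _ => by rw [hWone w]]
                simp [St11.sgn_zero, Finset.card_univ]
              rw [hWsum]
              ring
            · have hpr : a + rv x + rv x' ∉ E := by
                intro hmem
                apply hxx
                have := (hpair x x').1 hmem
                rw [hρ0, add_zero] at this
                exact this
              rw [St11.S_zero E W₀ D₀ hWD f a b (rv x) (rv x') hpr, if_neg hxx]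
          · -- W-character nontrivial : everything vanishes
            refine ⟨0, fun x x' => ?_⟩
            rw [zero_mul]
            by_cases hpr : a + rv x + rv x' ∈ E
            · rw [St11.S_formula E W₀ D₀ hWD f a b (rv x) (rv x') hpr]
              have hx' : x' = x + ρ := (hpair x x').1 hpr
              have hsub1 : (⟨a + rv x + rv x', hpr⟩ : ↥E) = ⟨a + rv ρ, hρ⟩ := by
                refine Subtype.ext ?_
                show a + rv x + rv x' = a + rv ρ
                rw [hx', rv_add]
                funext i
                exact St11.z2_c4 (a i) (rv x i) (rv ρ i)
              rw [hsub1, ← hsh]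
              have hrr : rv x + rv x' + St11.wv E W₀ sh = rv ρ + St11.wv E W₀ sh := by
                rw [hx', rv_add]
                funext i
                exact St11.z2_c6' (rv x i) (rv ρ i) (St11.wv E W₀ sh i)
              rw [hrr]
              have hWzero : (∑ w : ↥W₀, St11.sgn (St11.wv E W₀ (f w) ⬝ᵥ (rv ρ
                    + St11.wv E W₀ sh)
                  + St11.wv E W₀ w ⬝ᵥ St11.wv E W₀ (f sh)
                  + b ⬝ᵥ St11.wv E W₀ w)) = 0 := by
                have hcs := St11.charSum ℓW
                rw [if_neg hLW] at hcs
                rw [← hcs]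
                exact Finset.sum_congr rfl fun w _ => congrArg St11.sgn (hℓWapp w).symm
              rw [hWzero]
              ring
            · rw [St11.S_zero E W₀ D₀ hWD f a b (rv x) (rv x') hpr]
        · -- b ∉ C' : the D-character sum vanishes
          refine ⟨0, fun x x' => ?_⟩
          rw [zero_mul]
          by_cases hpr : a + rv x + rv x' ∈ E
          · rw [St11.S_formula E W₀ D₀ hWD f a b (rv x) (rv x') hpr]
            obtain ⟨ℓD, hℓDapp⟩ : ∃ ℓ : ↥D₀ →+ ZMod 2, ∀ dd, ℓ dd
                = b ⬝ᵥ St11.dv E D₀ dd := by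
              refine ⟨AddMonoidHom.mk' (fun dd => b ⬝ᵥ St11.dv E D₀ dd) ?_, fun dd => rfl⟩
              intro dd dd'
              show b ⬝ᵥ St11.dv E D₀ (dd + dd')
                = b ⬝ᵥ St11.dv E D₀ dd + b ⬝ᵥ St11.dv E D₀ dd'
              have hdvadd : St11.dv E D₀ (dd + dd') = St11.dv E D₀ dd + St11.dv E D₀ dd' := by
                simp [St11.dv]
              rw [hdvadd, dotProduct_add]
            have hDzero : (∑ dd : ↥D₀, St11.sgn (b ⬝ᵥ St11.dv E D₀ dd)) = 0 := by
              have hcs := St11.charSum ℓD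
              rw [if_neg] at hcs
              · rw [← hcs]
                exact Finset.sum_congr rfl fun dd _ => congrArg St11.sgn (hℓDapp dd).symm
              · intro hall
                apply hbC''
                apply hC'mem
                intro u hu
                have huE : u ∈ E := hDE hu
                have hdd : (⟨u, huE⟩ : ↥E) ∈ D₀ := (hD₀mem _).2 hu
                have hv := hall ⟨⟨u, huE⟩, hdd⟩
                rw [hℓDapp] at hv
                rw [dotProduct_comm]
                exact hv
            rw [hDzero]
            ring
          · rw [St11.S_zero E W₀ D₀ hWD f a b (rv x) (rv x') hpr]
      · -- no pairing at all
        refine ⟨0, fun x x' => ?_⟩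
        rw [zero_mul]
        apply St11.S_zero E W₀ D₀ hWD f a b (rv x) (rv x')
        intro hmem
        apply hcase
        refine ⟨x + x', ?_⟩
        rw [rv_add, ← add_assoc]
        exact hmem
    obtain ⟨lam, hlam⟩ := hlam
    have hME : ∀ (x x' : ↥R₀), star (Ψ x') ⬝ᵥ (Xop n a * Zop n b).mulVec (Ψ x)
        = ∑ v, Ψ x' v * St11.sgn (b ⬝ᵥ (v + a)) * Ψ x (v + a) := by
      intro x x'
      rw [hstar]
      show (∑ v, Ψ x' v * ((Xop n a * Zop n b).mulVec (Ψ x) v)) = _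
      refine Finset.sum_congr rfl fun v _ => ?_
      rw [hΨ]
      rw [St11.XZ_mulVec a b (St11.PSI E W₀ D₀ hWD f (rv x)) v]
      ring
    have hlin1 : ∀ u ∈ Q, ∀ x' : ↥R₀,
        star (Ψ x') ⬝ᵥ (Xop n a * Zop n b).mulVec u = lam * (star (Ψ x') ⬝ᵥ u) := by
      intro u hu
      refine Submodule.span_induction ?_ ?_ ?_ ?_ hu
      · rintro u' ⟨x, rfl⟩ x'
        rw [hME x x']
        exact hlam x x'
      · intro x'
        rw [Matrix.mulVec_zero]
        simp
      · intro u₁ u₂ hu₁ hu₂ ih₁ ih₂ x'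
        rw [Matrix.mulVec_add, dotProduct_add, dotProduct_add, ih₁ x', ih₂ x']
        ring
      · intro c u₁ hu₁ ih x'
        rw [Matrix.mulVec_smul, dotProduct_smul, dotProduct_smul, ih x',
          smul_eq_mul, smul_eq_mul]
        ring
    have hlin2 : ∀ φ' ∈ Q, star φ' ⬝ᵥ (Xop n a * Zop n b).mulVec ψp
        = lam * (star φ' ⬝ᵥ ψp) := by
      intro φ' hφ'
      refine Submodule.span_induction ?_ ?_ ?_ ?_ hφ'
      · rintro u' ⟨x, rfl⟩
        exact hlin1 ψp hψp x
      · rw [star_zero, zero_dotProduct, zero_dotProduct, mul_zero]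
      · intro u₁ u₂ hu₁ hu₂ ih₁ ih₂
        rw [star_add, add_dotProduct, add_dotProduct, ih₁, ih₂]
        ring
      · intro c u₁ hu₁ ih
        rw [star_smul, smul_dotProduct, smul_dotProduct, ih, smul_eq_mul,
          smul_eq_mul]
        ring
    rw [hlin2 φ hφ, horth, mul_zero]
end
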